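/- arXiv:1810.05607 — 2 statements merged into one kernel-verified Lean document; each statement's English description precedes it below -/
import Mathlib

section
/- Fix reals α, β with 0 ≤ α < 1 and β > 2. The subshift Σ has specification if and only if the sets D(a) and D(b) are both bounded. -/
noncomputable section

namespace IntermediateBeta

/-- The intermediate beta transformation `x ↦ βx + α mod 1`. -/
def F (α β : ℝ) (x : ℝ) : ℝ := Int.fract (β * x + α)

/-- The digit sequence of a point: `Om α β x n` is the index `i` with `F^[n] x ∈ J_i`.
For `y ∈ [0,1)` we have `y ∈ J_i ↔ ⌊β y + α⌋ = i`. -/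
def Om (α β : ℝ) (x : ℝ) : ℕ → ℕ := fun n => (⌊β * ((F α β)^[n] x) + α⌋).toNat

/-- `ℓ = ⌈α + β⌉ - 1`. -/
def ell (α β : ℝ) : ℕ := ⌈α + β⌉₊ - 1

/-- The subshift `Σ`: closure (in the product topology) of the set of digit sequences
of points of `[0,1)`. -/
def Sig (α β : ℝ) : Set (ℕ → ℕ) := closure (Om α β '' Set.Ico (0 : ℝ) 1)

/-- The shift map. -/
def shift (x : ℕ → ℕ) : ℕ → ℕ := fun n => x (n + 1)

/-- Lexicographic order on one-sided sequences. -/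
def lexLe (x y : ℕ → ℕ) : Prop := x = y ∨ ∃ k, (∀ i < k, x i = y i) ∧ x k < y k

/-- The language of a subset `S` of the full shift: the finite words occurring as
initial segments of elements of `S`. -/
def langOf (S : Set (ℕ → ℕ)) (w : List ℕ) : Prop :=
  ∃ x ∈ S, ∀ i : Fin w.length, x i = w.get i

/-- Membership in the language `𝓛` of the subshift `Σ`. -/
def inLang (α β : ℝ) (w : List ℕ) : Prop := langOf (Sig α β) w

/-- The tail segment of `w` of length `k` agrees with the initial segment of `s`
of length `k`. -/
def tailAgrees (s : ℕ → ℕ) (w : List ℕ) (k : ℕ) : Prop :=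
  k ≤ w.length ∧ ∀ i < k, w.getD (w.length - k + i) 0 = s i

/-- `kmax s w` is the length of the longest tail segment of `w` agreeing with an
initial segment of `s` (`k₁(w)` when `s = a`, `k₂(w)` when `s = b`). -/
def kmax (s : ℕ → ℕ) (w : List ℕ) : ℕ := sSup {k | tailAgrees s w k}

/-- `D a b` is the set of lengths `n` such that the initial segment of `b` of
length `n` occurs somewhere in `a`.  Thus `D a b` is the set `𝖣(a)` of the paper
and `D b a` is `𝖣(b)`. -/
def D (a b : ℕ → ℕ) : Set ℕ := {n | ∃ j, ∀ i < n, b i = a (j + i)}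

/-- Gluing of the words `w 0, v 0, w 1, v 1, …, v (n-1), w n`. -/
def glue {n : ℕ} (w : Fin (n + 1) → List ℕ) (v : Fin n → List ℕ) : List ℕ :=
  (List.ofFn fun i : Fin n => w i.castSucc ++ v i).flatten ++ w (Fin.last n)

/-- A collection `G` of words inside the language `lang` has specification: there
is `τ ∈ ℕ` such that any finite list of words of `G` can be glued, with gluing
words from `lang` of length `τ`, into a word of `lang`. -/
def HasSpec (lang G : List ℕ → Prop) : Prop :=
  ∃ τ : ℕ, 1 ≤ τ ∧ ∀ n : ℕ, ∀ w : Fin (n + 1) → List ℕ, (∀ i, G (w i)) →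
    ∃ v : Fin n → List ℕ, (∀ i, (v i).length = τ ∧ lang (v i)) ∧ lang (glue w v)

/-- The initial segment of a sequence, as a finite word. -/
def pre (s : ℕ → ℕ) (n : ℕ) : List ℕ := List.ofFn fun i : Fin n => s i

/-- Lexicographic order for finite words (of equal length). -/
def wordLe (u v : List ℕ) : Prop :=
  u = v ∨ ∃ k, (∀ i < k, u.getD i 0 = v.getD i 0) ∧ u.getD k 0 < v.getD k 0

/-- Concatenation of a finite word with an infinite sequence. -/
def wcat (w : List ℕ) (x : ℕ → ℕ) : ℕ → ℕ := fun n =>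
  if h : n < w.length then w.get ⟨n, h⟩ else x (n - w.length)

/-! ### Part 0: basics -/

lemma F_mem (α β x : ℝ) : F α β x ∈ Set.Ico (0:ℝ) 1 :=
  ⟨Int.fract_nonneg _, Int.fract_lt_one _⟩

lemma iter_mem (α β : ℝ) {t : ℝ} (ht : t ∈ Set.Ico (0:ℝ) 1) (n : ℕ) :
    (F α β)^[n] t ∈ Set.Ico (0:ℝ) 1 := by
  cases n with
  | zero => simpa
  | succ n => rw [Function.iterate_succ_apply']; exact F_mem α β _

lemma Om_cast {α β : ℝ} (hα0 : 0 ≤ α) (hβ0 : 0 ≤ β) {t : ℝ} (ht : t ∈ Set.Ico (0:ℝ) 1)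
    (n : ℕ) : ((Om α β t n : ℤ)) = ⌊β * ((F α β)^[n] t) + α⌋ := by
  have h := (iter_mem α β ht n).1
  exact Int.toNat_of_nonneg (Int.floor_nonneg.2 (add_nonneg (mul_nonneg hβ0 h) hα0))

lemma iter_succ_eq {α β : ℝ} (hα0 : 0 ≤ α) (hβ0 : 0 ≤ β) {t : ℝ}
    (ht : t ∈ Set.Ico (0:ℝ) 1) (n : ℕ) :
    (F α β)^[n+1] t = β * ((F α β)^[n] t) + α - Om α β t n := by
  rw [Function.iterate_succ_apply', F, Int.fract]
  have := Om_cast hα0 hβ0 ht n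
  congr 1
  exact_mod_cast this.symm

lemma Om_add (α β t : ℝ) (m n : ℕ) : Om α β t (m + n) = Om α β ((F α β)^[m] t) n := by
  unfold Om
  rw [Nat.add_comm m n, Function.iterate_add_apply]

/-! ### Part 1: topology interface -/

lemma Om_mem_Sig {α β : ℝ} {t : ℝ} (ht : t ∈ Set.Ico (0:ℝ) 1) : Om α β t ∈ Sig α β :=
  subset_closure ⟨t, ht, rfl⟩

lemma cylinder_isOpen (x : ℕ → ℕ) (m : ℕ) : IsOpen {y : ℕ → ℕ | ∀ i < m, y i = x i} := by
  have : {y : ℕ → ℕ | ∀ i < m, y i = x i}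
      = ⋂ i : Fin m, (fun y : ℕ → ℕ => y i.1) ⁻¹' {x i.1} := by
    ext y
    simp only [Set.mem_setOf_eq, Set.mem_iInter, Set.mem_preimage, Set.mem_singleton_iff]
    exact ⟨fun h i => h i.1 i.2, fun h i hi => h ⟨i, hi⟩⟩
  rw [this]
  exact isOpen_iInter_of_finite fun i => (continuous_apply (i.1 : ℕ)).isOpen_preimage _ trivial

lemma mem_Sig_iff {α β : ℝ} (x : ℕ → ℕ) :
    x ∈ Sig α β ↔ ∀ m, ∃ t ∈ Set.Ico (0:ℝ) 1, ∀ i < m, Om α β t i = x i := by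
  constructor
  · intro hx m
    rcases mem_closure_iff.1 hx _ (cylinder_isOpen x m) (fun i _ => rfl) with
      ⟨y, hy1, t, ht, rfl⟩
    exact ⟨t, ht, hy1⟩
  · intro h
    rw [Sig, mem_closure_iff]
    intro U hU hxU
    rcases isOpen_pi_iff.1 hU x hxU with ⟨I, u, hu, hsub⟩
    obtain ⟨t, ht, hagree⟩ := h (I.sup id + 1)
    refine ⟨Om α β t, hsub ?_, ⟨t, ht, rfl⟩⟩
    intro i hi
    have hlt : i < I.sup id + 1 := Nat.lt_succ_of_le (Finset.le_sup (f := id) hi)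
    rw [hagree i hlt]
    exact (hu i hi).2

lemma inLang_iff {α β : ℝ} (w : List ℕ) :
    inLang α β w ↔ ∃ t ∈ Set.Ico (0:ℝ) 1, ∀ i < w.length, Om α β t i = w.getD i 0 := by
  constructor
  · rintro ⟨x, hx, hagree⟩
    obtain ⟨t, ht, h⟩ := (mem_Sig_iff x).1 hx w.length
    refine ⟨t, ht, fun i hi => ?_⟩
    rw [h i hi, List.getD_eq_getElem w 0 hi]
    have := hagree ⟨i, hi⟩
    simpa [List.get_eq_getElem] using this
  · rintro ⟨t, ht, h⟩
    refine ⟨Om α β t, Om_mem_Sig ht, fun i => ?_⟩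
    rw [h i.1 i.2, List.getD_eq_getElem w 0 i.2]
    simp [List.get_eq_getElem]

/-! ### Part 2: lex machinery -/

lemma lex_lt_of_not {x y : ℕ → ℕ} (h : ¬ lexLe x y) :
    ∃ k, (∀ i < k, x i = y i) ∧ y k < x k := by
  have hne : x ≠ y := fun he => h (Or.inl he)
  have hex : ∃ k, x k ≠ y k := by
    by_contra h'
    push_neg at h'
    exact hne (funext h')
  refine ⟨Nat.find hex, fun i hi => not_not.1 (Nat.find_min hex hi), ?_⟩
  rcases lt_trichotomy (x (Nat.find hex)) (y (Nat.find hex)) with hlt | heq | hgt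
  · exact absurd (Or.inr ⟨Nat.find hex, fun i hi => not_not.1 (Nat.find_min hex hi), hlt⟩) h
  · exact absurd heq (Nat.find_spec hex)
  · exact hgt

lemma lex_squeeze {x y z : ℕ → ℕ} (hxy : lexLe x y) (hyz : lexLe y z) {n : ℕ}
    (h : ∀ i < n, x i = z i) : ∀ i < n, y i = x i := by
  intro i hi
  by_contra hne
  have hex : ∃ k, y k ≠ x k := ⟨i, hne⟩
  have hk : y (Nat.find hex) ≠ x (Nat.find hex) := Nat.find_spec hex
  have hmin : ∀ j < Nat.find hex, y j = x j := fun j hj => not_not.1 (Nat.find_min hex hj)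
  have hkn : Nat.find hex < n := lt_of_le_of_lt (Nat.find_min' hex hne) hi
  set k := Nat.find hex
  have hxk : x k < y k := by
    rcases hxy with rfl | ⟨k₀, hag, hlt⟩
    · exact absurd rfl hk
    · have h1 : ¬ k₀ < k := fun hc => (ne_of_lt hlt) (hmin k₀ hc).symm
      have h2 : ¬ k < k₀ := fun hc => hk (hag k hc).symm
      have : k₀ = k := by omega
      exact this ▸ hlt
  rcases hyz with rfl | ⟨k₁, hag₁, hlt₁⟩
  · exact hk (h k hkn).symm
  · rcases lt_trichotomy k₁ k with hc | rfl | hc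
    · exact (ne_of_lt hlt₁) ((hmin k₁ hc).trans (h k₁ (hc.trans hkn)))
    · have := h k hkn
      omega
    · have := hag₁ k hc
      have := h k hkn
      omega

lemma lex_shift {x y : ℕ → ℕ} (hxy : lexLe x y) {j : ℕ} (hag : ∀ i < j, x i = y i) :
    lexLe (fun n => x (j + n)) (fun n => y (j + n)) := by
  rcases hxy with rfl | ⟨k, hk, hlt⟩
  · exact Or.inl rfl
  · by_cases hkj : k < j
    · exact absurd (hag k hkj) (ne_of_lt hlt)
    · push_neg at hkj
      refine Or.inr ⟨k - j, fun i hi => hk _ (by omega), ?_⟩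
      show x (j + (k - j)) < y (j + (k - j))
      have hj : j + (k - j) = k := by omega
      rw [hj]
      exact hlt

lemma lexLe_of_closure {S : Set (ℕ → ℕ)} {x y : ℕ → ℕ} (hx : x ∈ closure S)
    (h : ∀ s ∈ S, lexLe s y) : lexLe x y := by
  by_contra hc
  obtain ⟨k, hag, hlt⟩ := lex_lt_of_not hc
  obtain ⟨s, hcyl, hS⟩ := mem_closure_iff.1 hx {z | ∀ i < k+1, z i = x i}
    (cylinder_isOpen x (k+1)) (fun i _ => rfl)
  have hsk : s k = x k := hcyl k (Nat.lt_succ_self k)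
  rcases h s hS with rfl | ⟨k', hag', hlt'⟩
  · omega
  · rcases lt_trichotomy k' k with hc' | rfl | hc'
    · have h1 : s k' = x k' := hcyl k' (by omega)
      have h2 : x k' = y k' := hag k' hc'
      omega
    · omega
    · have := hag' k hc'
      omega

lemma lexGe_of_closure {S : Set (ℕ → ℕ)} {x y : ℕ → ℕ} (hx : x ∈ closure S)
    (h : ∀ s ∈ S, lexLe y s) : lexLe y x := by
  by_contra hc
  obtain ⟨k, hag, hlt⟩ := lex_lt_of_not hc
  obtain ⟨s, hcyl, hS⟩ := mem_closure_iff.1 hx {z | ∀ i < k+1, z i = x i}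
    (cylinder_isOpen x (k+1)) (fun i _ => rfl)
  have hsk : s k = x k := hcyl k (Nat.lt_succ_self k)
  rcases h s hS with rfl | ⟨k', hag', hlt'⟩
  · omega
  · rcases lt_trichotomy k' k with hc' | rfl | hc'
    · have h1 : s k' = x k' := hcyl k' (by omega)
      have h2 : y k' = x k' := hag k' hc'
      omega
    · omega
    · have := hag' k hc'
      omega

lemma lex_antisymm {x y : ℕ → ℕ} (h1 : lexLe x y) (h2 : lexLe y x) : x = y := by
  rcases h1 with rfl | ⟨k, hag, hlt⟩
  · rfl
  · rcases h2 with rfl | ⟨k', hag', hlt'⟩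
    · rfl
    · exfalso
      rcases lt_trichotomy k' k with hc | rfl | hc
      · have := hag k' hc
        omega
      · omega
      · have := hag' k hc
        omega

/-! shift invariance -/

lemma shift_Om (α β t : ℝ) : shift (Om α β t) = Om α β (F α β t) :=
  funext fun n => by simp [shift, Om, Function.iterate_succ_apply]

lemma shift_mem_Sig {α β : ℝ} {x : ℕ → ℕ} (hx : x ∈ Sig α β) : shift x ∈ Sig α β := by
  have hc : Continuous shift := continuous_pi fun n => continuous_apply (n+1)
  have himg : shift '' (Om α β '' Set.Ico 0 1) ⊆ Om α β '' Set.Ico 0 1 := by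
    rintro _ ⟨_, ⟨t, ht, rfl⟩, rfl⟩
    exact ⟨F α β t, F_mem α β t, (shift_Om α β t).symm⟩
  have h1 : shift x ∈ shift '' Sig α β := Set.mem_image_of_mem shift hx
  have h2 : shift '' Sig α β ⊆ closure (shift '' (Om α β '' Set.Ico 0 1)) :=
    image_closure_subset_closure_image hc
  exact closure_mono himg (h2 h1)

lemma shift_iter_apply (x : ℕ → ℕ) (j n : ℕ) : (shift^[j] x) n = x (j + n) := by
  induction j generalizing x n with
  | zero => simp
  | succ j ih =>
    rw [Function.iterate_succ_apply, ih]
    simp [shift]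
    ring_nf

lemma shift_iter_mem_Sig {α β : ℝ} {x : ℕ → ℕ} (hx : x ∈ Sig α β) (j : ℕ) :
    shift^[j] x ∈ Sig α β := by
  induction j with
  | zero => simpa
  | succ j ih => rw [Function.iterate_succ_apply']; exact shift_mem_Sig ih

/-! ### Part 3: the upper orbit -/

def Bor (α β : ℝ) : ℕ → ℝ
  | 0 => 1
  | n+1 => β * Bor α β n + α - ((⌈β * Bor α β n + α⌉ - 1 : ℤ) : ℝ)

def bdig (α β : ℝ) (n : ℕ) : ℕ := (⌈β * Bor α β n + α⌉ - 1).toNat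

section UpperOrbit
variable {α β : ℝ} (hα0 : 0 ≤ α) (hβ0 : 0 < β)
include hα0 hβ0

lemma Bor_mem (n : ℕ) : Bor α β n ∈ Set.Ioc (0:ℝ) 1 := by
  induction n with
  | zero => exact ⟨one_pos, le_refl 1⟩
  | succ n ih =>
    have hx : (0:ℝ) < β * Bor α β n + α :=
      add_pos_of_pos_of_nonneg (mul_pos hβ0 ih.1) hα0
    constructor
    · have := Int.ceil_lt_add_one (β * Bor α β n + α)
      show (0:ℝ) < β * Bor α β n + α - ((⌈β * Bor α β n + α⌉ - 1 : ℤ) : ℝ)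
      push_cast
      linarith
    · have := Int.le_ceil (β * Bor α β n + α)
      show β * Bor α β n + α - ((⌈β * Bor α β n + α⌉ - 1 : ℤ) : ℝ) ≤ 1
      push_cast
      linarith

lemma bdig_cast (n : ℕ) : ((bdig α β n : ℤ)) = ⌈β * Bor α β n + α⌉ - 1 := by
  have hx : (0:ℝ) < β * Bor α β n + α :=
    add_pos_of_pos_of_nonneg (mul_pos hβ0 (Bor_mem hα0 hβ0 n).1) hα0
  have h1 : 1 ≤ ⌈β * Bor α β n + α⌉ := Int.ceil_pos.2 hx
  exact Int.toNat_of_nonneg (by omega)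

lemma Bor_succ (n : ℕ) :
    Bor α β (n+1) = β * Bor α β n + α - (bdig α β n : ℝ) := by
  show β * Bor α β n + α - ((⌈β * Bor α β n + α⌉ - 1 : ℤ) : ℝ) = _
  rw [← bdig_cast hα0 hβ0 n]
  push_cast
  ring

lemma bdig_lt (n : ℕ) : (bdig α β n : ℝ) < β * Bor α β n + α ∧
    β * Bor α β n + α ≤ (bdig α β n : ℝ) + 1 := by
  have h1 := Bor_succ hα0 hβ0 n
  have h2 := Bor_mem hα0 hβ0 (n+1)
  constructor <;> [linarith [h2.1, h1]; linarith [h2.2, h1]]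

lemma bdig_approx (m : ℕ) : ∀ ε > (0:ℝ), ∃ t ∈ Set.Ico (0:ℝ) 1,
    (∀ i < m, Om α β t i = bdig α β i) ∧
    Bor α β m - ε < (F α β)^[m] t ∧ (F α β)^[m] t < Bor α β m := by
  induction m with
  | zero =>
    intro ε hε
    refine ⟨1 - min ε 1 / 2, ⟨by simp; linarith [min_le_right ε 1], by simp; positivity⟩,
      fun i hi => absurd hi (Nat.not_lt_zero i), ?_, ?_⟩
    · show Bor α β 0 - ε < 1 - min ε 1 / 2
      show (1:ℝ) - ε < 1 - min ε 1 / 2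
      have : min ε 1 / 2 < ε := by
        rcases min_cases ε 1 with ⟨h, _⟩ | ⟨h, hle⟩ <;> [linarith; linarith]
      linarith
    · show (1:ℝ) - min ε 1 / 2 < Bor α β 0
      show (1:ℝ) - min ε 1 / 2 < 1
      have : 0 < min ε 1 := lt_min hε one_pos
      linarith
  | succ m ih =>
    intro ε hε
    have hBm1 := Bor_mem hα0 hβ0 (m+1)
    set ε' := min (ε / β) (Bor α β (m+1) / β) with hε'def
    have hε' : 0 < ε' := lt_min (div_pos hε hβ0) (div_pos hBm1.1 hβ0)
    obtain ⟨t, ht, hpre, hlo, hhi⟩ := ih ε' hε'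
    have hd := bdig_lt hα0 hβ0 m
    -- digit at position m equals bdig m
    have hflo : (bdig α β m : ℝ) ≤ β * (F α β)^[m] t + α := by
      have h1 : β * ε' ≤ Bor α β (m+1) := by
        have := min_le_right (ε / β) (Bor α β (m+1) / β)
        calc β * ε' ≤ β * (Bor α β (m+1) / β) := by nlinarith
        _ = Bor α β (m+1) := by field_simp
      have h2 := Bor_succ hα0 hβ0 m
      nlinarith
    have hfhi : β * (F α β)^[m] t + α < (bdig α β m : ℝ) + 1 := by
      nlinarith [hd.2, (Bor_mem hα0 hβ0 (m+1)).1, Bor_succ hα0 hβ0 m]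
    have hdig : Om α β t m = bdig α β m := by
      have : (⌊β * (F α β)^[m] t + α⌋ : ℤ) = (bdig α β m : ℤ) := by
        rw [show ((bdig α β m : ℤ)) = ((bdig α β m : ℕ) : ℤ) from rfl, Int.floor_eq_iff]
        constructor
        · push_cast
          exact hflo
        · push_cast
          exact hfhi
      unfold Om
      omega
    have hiter := iter_succ_eq hα0 (le_of_lt hβ0) ht m
    rw [hdig] at hiter
    have hB := Bor_succ hα0 hβ0 m
    refine ⟨t, ht, ?_, ?_, ?_⟩
    · intro i hi
      rcases Nat.lt_succ_iff_lt_or_eq.1 hi with h | rfl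
      · exact hpre i h
      · exact hdig
    · rw [hiter]
      have hβε : β * ε' ≤ ε := by
        have := min_le_left (ε / β) (Bor α β (m+1) / β)
        calc β * ε' ≤ β * (ε / β) := by nlinarith
        _ = ε := by field_simp
      nlinarith
    · rw [hiter]
      nlinarith

lemma bdig_mem_Sig : bdig α β ∈ Sig α β := by
  rw [mem_Sig_iff]
  intro m
  obtain ⟨t, ht, hpre, _, _⟩ := bdig_approx hα0 hβ0 m 1 one_pos
  exact ⟨t, ht, hpre⟩

lemma iter_lt_Bor {t : ℝ} (ht : t ∈ Set.Ico (0:ℝ) 1) {s : ℕ}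
    (h : ∀ i < s, Om α β t i = bdig α β i) : (F α β)^[s] t < Bor α β s := by
  induction s with
  | zero => exact ht.2
  | succ s ih =>
    have hlt : (F α β)^[s] t < Bor α β s := ih (fun i hi => h i (hi.trans (Nat.lt_succ_self s)))
    rw [iter_succ_eq hα0 (le_of_lt hβ0) ht s, h s (Nat.lt_succ_self s), Bor_succ hα0 hβ0 s]
    nlinarith

lemma Om_le_bdig {t : ℝ} (ht : t ∈ Set.Ico (0:ℝ) 1) : lexLe (Om α β t) (bdig α β) := by
  by_cases hall : ∀ k, Om α β t k = bdig α β k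
  · exact Or.inl (funext hall)
  · push_neg at hall
    have hk := Nat.find_spec hall
    have hmin : ∀ i < Nat.find hall, Om α β t i = bdig α β i :=
      fun i hi => not_not.1 (Nat.find_min hall hi)
    refine Or.inr ⟨Nat.find hall, hmin, ?_⟩
    set k := Nat.find hall
    have hlt := iter_lt_Bor hα0 hβ0 ht hmin
    have h1 : β * (F α β)^[k] t + α < β * Bor α β k + α := by nlinarith
    have h2 : (⌊β * (F α β)^[k] t + α⌋ : ℤ) ≤ (bdig α β k : ℤ) := by
      rw [bdig_cast hα0 hβ0 k]
      have h3 : (⌊β * (F α β)^[k] t + α⌋ : ℤ) < ⌈β * Bor α β k + α⌉ := by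
        by_contra hcon
        push_neg at hcon
        have h4 : (⌈β * Bor α β k + α⌉ : ℝ) ≤ ⌊β * (F α β)^[k] t + α⌋ := by exact_mod_cast hcon
        have h5 := Int.floor_le (β * (F α β)^[k] t + α)
        have h6 := Int.le_ceil (β * Bor α β k + α)
        linarith
      omega
    have h7 : Om α β t k ≤ bdig α β k := by
      have := Om_cast hα0 (le_of_lt hβ0) ht k
      omega
    omega

lemma sig_le_bdig (x : ℕ → ℕ) (hx : x ∈ Sig α β) : lexLe x (bdig α β) := by
  refine lexLe_of_closure hx ?_
  rintro s ⟨t, ht, rfl⟩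
  exact Om_le_bdig hα0 hβ0 ht

/-! ### Part 4: the lower orbit is minimal -/

omit hα0 hβ0 in
lemma zero_mem_Ico : (0:ℝ) ∈ Set.Ico (0:ℝ) 1 := ⟨le_refl 0, one_pos⟩

lemma iter_ge_c {t : ℝ} (ht : t ∈ Set.Ico (0:ℝ) 1) {s : ℕ}
    (h : ∀ i < s, Om α β t i = Om α β 0 i) : (F α β)^[s] 0 ≤ (F α β)^[s] t := by
  induction s with
  | zero => simpa using ht.1
  | succ s ih =>
    have hge := ih (fun i hi => h i (hi.trans (Nat.lt_succ_self s)))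
    rw [iter_succ_eq hα0 (le_of_lt hβ0) ht s, iter_succ_eq hα0 (le_of_lt hβ0) zero_mem_Ico s,
      h s (Nat.lt_succ_self s)]
    nlinarith

lemma a_le_Om {t : ℝ} (ht : t ∈ Set.Ico (0:ℝ) 1) : lexLe (Om α β 0) (Om α β t) := by
  by_cases hall : ∀ k, Om α β 0 k = Om α β t k
  · exact Or.inl (funext hall)
  · push_neg at hall
    have hk := Nat.find_spec hall
    have hmin : ∀ i < Nat.find hall, Om α β 0 i = Om α β t i :=
      fun i hi => not_not.1 (Nat.find_min hall hi)
    refine Or.inr ⟨Nat.find hall, hmin, ?_⟩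
    set k := Nat.find hall
    have hge := iter_ge_c hα0 hβ0 ht (fun i hi => (hmin i hi).symm)
    have h1 : β * (F α β)^[k] 0 + α ≤ β * (F α β)^[k] t + α := by nlinarith
    have h2 := Int.floor_le_floor h1
    have h3 := Om_cast hα0 (le_of_lt hβ0) ht k
    have h4 := Om_cast hα0 (le_of_lt hβ0) zero_mem_Ico k
    omega

lemma a_min (x : ℕ → ℕ) (hx : x ∈ Sig α β) : lexLe (Om α β 0) x := by
  refine lexGe_of_closure hx ?_
  rintro s ⟨t, ht, rfl⟩
  exact a_le_Om hα0 hβ0 ht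

end UpperOrbit

/-! ### Part 6: images of cylinders -/

def PQstep (α β : ℝ) (pq : ℝ × ℝ) (d : ℕ) : ℝ × ℝ :=
  (max (β * pq.1 + α - d) 0, min (β * pq.2 + α - d) 1)

def PQ (α β : ℝ) (w : List ℕ) : ℝ × ℝ := w.foldl (PQstep α β) (0, 1)

section PQsec
variable {α β : ℝ}

lemma PQ_nil : PQ α β [] = (0, 1) := rfl

lemma PQ_snoc (w : List ℕ) (d : ℕ) : PQ α β (w ++ [d]) = PQstep α β (PQ α β w) d := by
  rw [PQ, List.foldl_append]
  rfl

lemma PQ_bounds (w : List ℕ) : 0 ≤ (PQ α β w).1 ∧ (PQ α β w).2 ≤ 1 := by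
  induction w using List.reverseRecOn with
  | nil => exact ⟨le_refl 0, le_refl 1⟩
  | append_singleton w d ih =>
    rw [PQ_snoc]
    exact ⟨le_max_right _ _, min_le_right _ _⟩

variable (hα0 : 0 ≤ α) (hβ0 : 0 < β)
include hα0 hβ0

lemma claimA_fwd {t : ℝ} (ht : t ∈ Set.Ico (0:ℝ) 1) :
    ∀ w : List ℕ, (∀ i < w.length, Om α β t i = w.getD i 0) →
    (PQ α β w).1 ≤ (F α β)^[w.length] t ∧ (F α β)^[w.length] t < (PQ α β w).2 := by
  intro w
  induction w using List.reverseRecOn with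
  | nil => intro _; simpa [PQ_nil] using ⟨ht.1, ht.2⟩
  | append_singleton w d ih =>
    intro h
    have hlen : (w ++ [d]).length = w.length + 1 := by simp
    have hw : ∀ i < w.length, Om α β t i = w.getD i 0 := by
      intro i hi
      rw [h i (by simp; omega), List.getD_append _ _ _ _ hi]
    obtain ⟨hp, hq⟩ := ih hw
    have hd : Om α β t w.length = d := by
      have := h w.length (by simp)
      rw [List.getD_append_right w [d] 0 w.length (le_refl w.length), Nat.sub_self] at this
      simpa using this
    have hiter := iter_succ_eq hα0 (le_of_lt hβ0) ht w.length
    rw [hd] at hiter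
    have hmem := iter_mem α β ht (w.length + 1)
    rw [hiter] at hmem
    rw [hlen, PQ_snoc, PQstep, hiter]
    constructor
    · apply max_le
      · nlinarith
      · exact hmem.1
    · apply lt_min
      · nlinarith
      · exact hmem.2

lemma claimA_bwd :
    ∀ w : List ℕ, ∀ y : ℝ, (PQ α β w).1 ≤ y → y < (PQ α β w).2 →
    ∃ t ∈ Set.Ico (0:ℝ) 1, (∀ i < w.length, Om α β t i = w.getD i 0) ∧
      (F α β)^[w.length] t = y := by
  intro w
  induction w using List.reverseRecOn with
  | nil =>
    intro y h1 h2
    exact ⟨y, ⟨h1, h2⟩, fun i hi => absurd hi (Nat.not_lt_zero i), rfl⟩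
  | append_singleton w d ih =>
    intro y h1 h2
    rw [PQ_snoc, PQstep] at h1 h2
    have hy0 : 0 ≤ y := le_trans (le_max_right _ _) h1
    have hy1 : y < 1 := lt_of_lt_of_le h2 (min_le_right _ _)
    set z := (y + d - α) / β with hz
    have hz1 : β * z = y + d - α := by
      rw [hz]; field_simp
    have hzp : (PQ α β w).1 ≤ z := by
      have := le_trans (le_max_left _ _) h1
      rw [hz, le_div_iff₀ hβ0]
      nlinarith
    have hzq : z < (PQ α β w).2 := by
      have := lt_of_lt_of_le h2 (min_le_left _ _)
      rw [hz, div_lt_iff₀ hβ0]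
      nlinarith
    obtain ⟨t, ht, hpre, hFt⟩ := ih z hzp hzq
    have hdig : (⌊β * z + α⌋ : ℤ) = (d : ℤ) := by
      rw [show ((d:ℤ)) = ((d:ℕ):ℤ) from rfl, Int.floor_eq_iff]
      constructor
      · push_cast; nlinarith
      · push_cast; nlinarith
    refine ⟨t, ht, ?_, ?_⟩
    · intro i hi
      simp only [List.length_append, List.length_singleton] at hi
      rcases Nat.lt_succ_iff_lt_or_eq.1 hi with hlt | rfl
      · rw [List.getD_append _ _ _ _ hlt]
        exact hpre i hlt
      · rw [List.getD_append_right w [d] 0 w.length (le_refl _), Nat.sub_self]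
        show Om α β t w.length = [d].getD 0 0
        unfold Om
        rw [hFt, hdig]
        simp
    · have hOm : Om α β t w.length = d := by
        unfold Om
        rw [hFt, hdig]
        simp
      have hiter := iter_succ_eq hα0 (le_of_lt hβ0) ht w.length
      rw [hOm, hFt] at hiter
      simp only [List.length_append, List.length_singleton]
      rw [hiter]
      push_cast
      linarith [hz1]

lemma PQ_inv :
    ∀ w : List ℕ, (PQ α β w).1 < (PQ α β w).2 →
    (∃ k1 ≤ w.length, (PQ α β w).1 = (F α β)^[k1] 0 ∧
        ∀ i < k1, w.getD (w.length - k1 + i) 0 = Om α β 0 i) ∧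
    (∃ k2 ≤ w.length, (PQ α β w).2 = Bor α β k2 ∧
        ∀ i < k2, w.getD (w.length - k2 + i) 0 = bdig α β i) := by
  intro w
  induction w using List.reverseRecOn with
  | nil =>
    intro _
    constructor
    · exact ⟨0, le_refl 0, rfl, fun i hi => absurd hi (Nat.not_lt_zero i)⟩
    · exact ⟨0, le_refl 0, rfl, fun i hi => absurd hi (Nat.not_lt_zero i)⟩
  | append_singleton w d ih =>
    intro hne
    have hlen : (w ++ [d]).length = w.length + 1 := by simp
    -- the shorter word has a nonempty interval
    have hwne : (PQ α β w).1 < (PQ α β w).2 := by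
      by_contra hcon
      push_neg at hcon
      have : (PQ α β (w ++ [d])).2 ≤ (PQ α β (w ++ [d])).1 := by
        rw [PQ_snoc, PQstep]
        refine le_trans (min_le_left _ _) (le_trans ?_ (le_max_left _ _))
        nlinarith
      exact absurd hne (not_lt.2 this)
    obtain ⟨⟨k1, hk1, hP, hsufP⟩, ⟨k2, hk2, hQ, hsufQ⟩⟩ := ih hwne
    have hPb := PQ_bounds (α := α) (β := β) (w ++ [d])
    have hiterP := iter_succ_eq hα0 (le_of_lt hβ0) zero_mem_Ico k1
    have hmemP := iter_mem α β zero_mem_Ico (k1 + 1)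
    have hBsucc := Bor_succ hα0 hβ0 k2
    have hBmem := Bor_mem hα0 hβ0 (k2 + 1)
    constructor
    · -- P side
      by_cases hcase : d = Om α β 0 k1
      · refine ⟨k1 + 1, by omega, ?_, ?_⟩
        · rw [PQ_snoc, PQstep]
          simp only
          rw [hP, hcase]
          rw [max_eq_left (by rw [← hiterP]; exact hmemP.1)]
          exact hiterP.symm
        · intro i hi
          rcases Nat.lt_succ_iff_lt_or_eq.1 hi with hlt | heq
          · have hidx : (w ++ [d]).length - (k1 + 1) + i < w.length := by
              rw [hlen]; omega
            rw [List.getD_append _ _ _ _ hidx]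
            have : (w ++ [d]).length - (k1 + 1) + i = w.length - k1 + i := by
              rw [hlen]; omega
            rw [this]
            exact hsufP i hlt
          · subst heq
            have : (w ++ [d]).length - (i + 1) + i = w.length := by rw [hlen]; omega
            rw [this, List.getD_append_right w [d] 0 w.length (le_refl _), Nat.sub_self]
            simpa using hcase
      · -- digits differ
        rcases Nat.lt_or_ge d (Om α β 0 k1) with hlt | hge
        · -- d < a_{k1} : impossible, interval would be empty
          exfalso
          have h1 : (1:ℝ) ≤ β * (F α β)^[k1] 0 + α - d := by
            have : (d:ℝ) + 1 ≤ Om α β 0 k1 := by exact_mod_cast hlt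
            linarith [hmemP.1, hiterP]
          have : (1:ℝ) ≤ (PQ α β (w ++ [d])).1 := by
            rw [PQ_snoc, PQstep]
            simp only
            rw [hP]
            exact le_trans h1 (le_max_left _ _)
          linarith [hPb.2, hne]
        · -- d > a_{k1} : reset to 0
          have hgt : Om α β 0 k1 < d := lt_of_le_of_ne hge (fun h => hcase h.symm)
          refine ⟨0, Nat.zero_le _, ?_, fun i hi => absurd hi (Nat.not_lt_zero i)⟩
          rw [PQ_snoc, PQstep]
          simp only
          rw [hP]
          rw [max_eq_right]
          · rfl
          · have : (Om α β 0 k1 : ℝ) + 1 ≤ d := by exact_mod_cast hgt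
            linarith [hmemP.2, hiterP]
    · -- Q side
      by_cases hcase : d = bdig α β k2
      · refine ⟨k2 + 1, by omega, ?_, ?_⟩
        · rw [PQ_snoc, PQstep]
          simp only
          rw [hQ, hcase]
          rw [min_eq_left (by rw [← hBsucc]; exact hBmem.2)]
          exact hBsucc.symm
        · intro i hi
          rcases Nat.lt_succ_iff_lt_or_eq.1 hi with hlt | heq
          · have hidx : (w ++ [d]).length - (k2 + 1) + i < w.length := by
              rw [hlen]; omega
            rw [List.getD_append _ _ _ _ hidx]
            have : (w ++ [d]).length - (k2 + 1) + i = w.length - k2 + i := by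
              rw [hlen]; omega
            rw [this]
            exact hsufQ i hlt
          · subst heq
            have : (w ++ [d]).length - (i + 1) + i = w.length := by rw [hlen]; omega
            rw [this, List.getD_append_right w [d] 0 w.length (le_refl _), Nat.sub_self]
            simpa using hcase
      · rcases Nat.lt_or_ge d (bdig α β k2) with hlt | hge
        · -- d < b_{k2} : reset to 1
          refine ⟨0, Nat.zero_le _, ?_, fun i hi => absurd hi (Nat.not_lt_zero i)⟩
          rw [PQ_snoc, PQstep]
          simp only
          rw [hQ]
          rw [min_eq_right]
          · rfl
          · have : (d:ℝ) + 1 ≤ bdig α β k2 := by exact_mod_cast hlt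
            linarith [hBmem.1, hBsucc]
        · -- d > b_{k2} : impossible
          exfalso
          have hgt : bdig α β k2 < d := lt_of_le_of_ne hge (fun h => hcase h.symm)
          have h1 : β * Bor α β k2 + α - d ≤ 0 := by
            have : (bdig α β k2 : ℝ) + 1 ≤ d := by exact_mod_cast hgt
            linarith [hBmem.2, hBsucc]
          have : (PQ α β (w ++ [d])).2 ≤ 0 := by
            rw [PQ_snoc, PQstep]
            simp only
            rw [hQ]
            exact le_trans (min_le_left _ _) h1
          linarith [hPb.1, hne]

end PQsec

/-! ### Part 6b: lower bound on the lengths of cylinder images -/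

section Delta
variable {α β : ℝ} (hα0 : 0 ≤ α) (hβ0 : 0 < β) (hβ1 : 1 ≤ β)

omit hα0 hβ0 hβ1 in
lemma exists_first_diff {f g : ℕ → ℕ} {N : ℕ} (h : ∃ i, i ≤ N ∧ f i ≠ g i) :
    ∃ r, r ≤ N ∧ (∀ i < r, f i = g i) ∧ f r ≠ g r := by
  obtain ⟨i0, hi0, hne⟩ := h
  have hex : ∃ i, f i ≠ g i := ⟨i0, hne⟩
  exact ⟨Nat.find hex, le_trans (Nat.find_min' hex hne) hi0,
    fun i hi => not_not.1 (Nat.find_min hex hi), Nat.find_spec hex⟩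

include hα0 hβ0

lemma track1 (s : ℕ) : ∀ r : ℕ, (∀ i < r, bdig α β (s + i) = Om α β 0 i) →
    Bor α β (s + r) - (F α β)^[r] 0 = β ^ r * Bor α β s := by
  intro r
  induction r with
  | zero => simp
  | succ r ih =>
    intro h
    have hr := ih (fun i hi => h i (by omega))
    have h1 : Bor α β (s + (r + 1)) = β * Bor α β (s + r) + α - bdig α β (s + r) := by
      rw [show s + (r + 1) = (s + r) + 1 by ring]
      exact Bor_succ hα0 hβ0 (s + r)
    have h2 := iter_succ_eq hα0 (le_of_lt hβ0) zero_mem_Ico r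
    rw [h1, h2, h r (by omega)]
    rw [pow_succ]
    nlinarith [hr]

lemma track2 (j : ℕ) : ∀ r : ℕ, (∀ i < r, Om α β 0 (j + i) = bdig α β i) →
    Bor α β r - (F α β)^[j + r] 0 = β ^ r * (1 - (F α β)^[j] 0) := by
  intro r
  induction r with
  | zero => simp [Bor]
  | succ r ih =>
    intro h
    have hr := ih (fun i hi => h i (by omega))
    have h1 := Bor_succ hα0 hβ0 r
    have h2 := iter_succ_eq hα0 (le_of_lt hβ0) zero_mem_Ico (j + r)
    rw [show j + (r + 1) = (j + r) + 1 by ring, h1, h2, h r (by omega)]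
    rw [pow_succ]
    nlinarith [hr]

lemma adig_le_bdig {m n : ℕ} (h : (F α β)^[m] 0 < Bor α β n) :
    Om α β 0 m ≤ bdig α β n := by
  have h1 : β * (F α β)^[m] 0 + α < β * Bor α β n + α := by nlinarith
  have h2 := (bdig_lt hα0 hβ0 n).2
  have h3 := Int.floor_le (β * (F α β)^[m] 0 + α)
  have h4 : (⌊β * (F α β)^[m] 0 + α⌋ : ℝ) < (bdig α β n : ℝ) + 1 := by linarith
  have h5 : (⌊β * (F α β)^[m] 0 + α⌋ : ℤ) < (bdig α β n : ℤ) + 1 := by exact_mod_cast h4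
  have h6 := Om_cast hα0 (le_of_lt hβ0) zero_mem_Ico m
  omega

include hβ1

lemma Bor_lower {N : ℕ} (hN : ∀ n ∈ D (bdig α β) (Om α β 0), n ≤ N) :
    ∃ δ > (0:ℝ), ∀ s, δ ≤ Bor α β s := by
  have hrne : (Finset.range (N + 2)).Nonempty := ⟨0, by simp⟩
  set Cm := (Finset.range (N + 2)).sup' hrne (fun i => (F α β)^[i] 0) with hCm
  have hCm1 : Cm < 1 := by
    rw [hCm, Finset.sup'_lt_iff]
    exact fun i _ => (iter_mem α β zero_mem_Ico i).2
  have hpowpos : (0:ℝ) < β ^ (N + 1) := by positivity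
  refine ⟨(1 - Cm) / β ^ (N + 1), div_pos (by linarith) hpowpos, ?_⟩
  intro s
  have hex : ∃ i, i ≤ N ∧ bdig α β (s + i) ≠ Om α β 0 i := by
    by_contra hc
    push_neg at hc
    have hmem : (N + 1) ∈ D (bdig α β) (Om α β 0) :=
      ⟨s, fun i hi => (hc i (by omega)).symm⟩
    have := hN _ hmem
    omega
  obtain ⟨r, hrN, hag, hne⟩ := exists_first_diff hex
  have htr := track1 hα0 hβ0 s r hag
  have hBs := (Bor_mem hα0 hβ0 s).1
  have hpos : (0:ℝ) < β ^ r * Bor α β s := by positivity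
  have hlt : (F α β)^[r] 0 < Bor α β (s + r) := by linarith
  have hle : Om α β 0 r + 1 ≤ bdig α β (s + r) := by
    have := adig_le_bdig hα0 hβ0 hlt
    have hne' : Om α β 0 r ≠ bdig α β (s + r) := fun hh => hne hh.symm
    omega
  have h1 := (bdig_lt hα0 hβ0 (s + r)).1
  have h2 := iter_succ_eq hα0 (le_of_lt hβ0) zero_mem_Ico r
  have h3 := (iter_mem α β zero_mem_Ico (r + 1)).2
  -- β^(r+1) * Bor s > 1 - c_{r+1}
  have hkey : β ^ (r + 1) * Bor α β s > 1 - (F α β)^[r + 1] 0 := by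
    have hle' : (Om α β 0 r : ℝ) + 1 ≤ (bdig α β (s + r) : ℝ) := by exact_mod_cast hle
    have : β * (Bor α β (s + r) - (F α β)^[r] 0) > 1 - (F α β)^[r + 1] 0 := by
      nlinarith
    rw [htr] at this
    rw [pow_succ]
    nlinarith
  have hc1 : (F α β)^[r + 1] 0 ≤ Cm := by
    rw [hCm]
    exact Finset.le_sup' (f := fun i => (F α β)^[i] 0) (Finset.mem_range.2 (by omega))
  have hpow : β ^ (r + 1) ≤ β ^ (N + 1) := pow_le_pow_right₀ hβ1 (by omega)
  rw [div_le_iff₀ hpowpos]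
  have hkey2 : 1 - Cm ≤ β ^ (r + 1) * Bor α β s := by linarith
  calc 1 - Cm ≤ β ^ (r + 1) * Bor α β s := hkey2
    _ ≤ β ^ (N + 1) * Bor α β s := by nlinarith
    _ = Bor α β s * β ^ (N + 1) := by ring

lemma one_sub_c_lower {N : ℕ} (hN : ∀ n ∈ D (Om α β 0) (bdig α β), n ≤ N)
    {δ₁ : ℝ} (hδ₁ : 0 < δ₁) (hB : ∀ s, δ₁ ≤ Bor α β s) :
    ∀ j, δ₁ / β ^ (N + 1) ≤ 1 - (F α β)^[j] 0 := by
  intro j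
  have hpowpos : (0:ℝ) < β ^ (N + 1) := by positivity
  have hex : ∃ i, i ≤ N ∧ Om α β 0 (j + i) ≠ bdig α β i := by
    by_contra hc
    push_neg at hc
    have hmem : (N + 1) ∈ D (Om α β 0) (bdig α β) :=
      ⟨j, fun i hi => (hc i (by omega)).symm⟩
    have := hN _ hmem
    omega
  obtain ⟨r, hrN, hag, hne⟩ := exists_first_diff hex
  have htr := track2 hα0 hβ0 j r hag
  have hcj := (iter_mem α β zero_mem_Ico j).2
  have hpos : (0:ℝ) < β ^ r * (1 - (F α β)^[j] 0) :=
    mul_pos (pow_pos hβ0 r) (by linarith)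
  have hlt : (F α β)^[j + r] 0 < Bor α β r := by linarith
  have hle : Om α β 0 (j + r) + 1 ≤ bdig α β r := by
    have := adig_le_bdig hα0 hβ0 hlt
    omega
  have h1 := Bor_succ hα0 hβ0 r
  have h2 := iter_succ_eq hα0 (le_of_lt hβ0) zero_mem_Ico (j + r)
  have h3 := (iter_mem α β zero_mem_Ico (j + r + 1)).2
  have hBr1 := hB (r + 1)
  have hkey : β ^ (r + 1) * (1 - (F α β)^[j] 0) > δ₁ := by
    have hle' : (Om α β 0 (j + r) : ℝ) + 1 ≤ (bdig α β r : ℝ) := by exact_mod_cast hle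
    have : β * (Bor α β r - (F α β)^[j + r] 0) > δ₁ := by nlinarith
    rw [htr] at this
    rw [pow_succ]
    nlinarith
  have hpow : β ^ (r + 1) ≤ β ^ (N + 1) := pow_le_pow_right₀ hβ1 (by omega)
  rw [div_le_iff₀ hpowpos]
  have h1cj : 0 ≤ 1 - (F α β)^[j] 0 := by linarith
  calc δ₁ ≤ β ^ (r + 1) * (1 - (F α β)^[j] 0) := le_of_lt hkey
    _ ≤ β ^ (N + 1) * (1 - (F α β)^[j] 0) := by nlinarith
    _ = (1 - (F α β)^[j] 0) * β ^ (N + 1) := by ring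

lemma PQ_gap (hD1 : BddAbove (D (Om α β 0) (bdig α β)))
    (hD2 : BddAbove (D (bdig α β) (Om α β 0))) :
    ∃ δ > (0:ℝ), ∀ w : List ℕ, inLang α β w →
      δ ≤ (PQ α β w).2 - (PQ α β w).1 := by
  obtain ⟨N2, hN2⟩ := hD2
  obtain ⟨δ₁, hδ₁, hB⟩ := Bor_lower hα0 hβ0 hβ1 (fun n hn => hN2 hn)
  obtain ⟨N1, hN1⟩ := hD1
  have h1c := one_sub_c_lower hα0 hβ0 hβ1 (fun n hn => hN1 hn) hδ₁ hB
  set δ₂ := δ₁ / β ^ (N1 + 1) with hδ₂def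
  have hδ₂ : 0 < δ₂ := by positivity
  refine ⟨min δ₁ δ₂, lt_min hδ₁ hδ₂, ?_⟩
  intro w hw
  obtain ⟨t, ht, hpre⟩ := (inLang_iff w).1 hw
  have hfw := claimA_fwd hα0 hβ0 ht w hpre
  have hpq : (PQ α β w).1 < (PQ α β w).2 := lt_of_le_of_lt hfw.1 hfw.2
  obtain ⟨⟨k1, hk1, hP, hsufP⟩, ⟨k2, hk2, hQ, hsufQ⟩⟩ := PQ_inv hα0 hβ0 w hpq
  rcases le_or_gt k2 k1 with hcase | hcase
  · have hco : ∀ i < k2, Om α β 0 (k1 - k2 + i) = bdig α β i := by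
      intro i hi
      have h1 := hsufQ i hi
      have h2 := hsufP (k1 - k2 + i) (by omega)
      have heq : w.length - k1 + (k1 - k2 + i) = w.length - k2 + i := by omega
      rw [heq] at h2
      rw [← h2, ← h1]
    have htr := track2 hα0 hβ0 (k1 - k2) k2 hco
    have heq : k1 - k2 + k2 = k1 := by omega
    rw [heq] at htr
    rw [hP, hQ]
    have hc := h1c (k1 - k2)
    have hpow : (1:ℝ) ≤ β ^ k2 := by
      have := pow_le_pow_right₀ hβ1 (Nat.zero_le k2)
      simpa using this
    have hnn : (0:ℝ) ≤ 1 - (F α β)^[k1 - k2] 0 := le_trans (le_of_lt hδ₂) hc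
    have hmin : min δ₁ δ₂ ≤ δ₂ := min_le_right _ _
    nlinarith [htr]
  · have hco : ∀ i < k1, bdig α β (k2 - k1 + i) = Om α β 0 i := by
      intro i hi
      have h1 := hsufP i hi
      have h2 := hsufQ (k2 - k1 + i) (by omega)
      have heq : w.length - k2 + (k2 - k1 + i) = w.length - k1 + i := by omega
      rw [heq] at h2
      rw [← h2, ← h1]
    have htr := track1 hα0 hβ0 (k2 - k1) k1 hco
    have heq : k2 - k1 + k1 = k2 := by omega
    rw [heq] at htr
    rw [hP, hQ]
    have hBk := hB (k2 - k1)
    have hpow : (1:ℝ) ≤ β ^ k1 := by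
      have := pow_le_pow_right₀ hβ1 (Nat.zero_le k1)
      simpa using this
    have hmin : min δ₁ δ₂ ≤ δ₁ := min_le_left _ _
    nlinarith [htr]

end Delta

/-! ### Part 7: covering -/

section Cover
variable {α β : ℝ} (hα0 : 0 ≤ α) (hβ : 2 < β)
include hα0 hβ

lemma cellmap {p' q' : ℝ} (hp' : 0 ≤ p') (hq' : q' ≤ 1) {i : ℤ}
    (hi1 : (i:ℝ) ≤ β * p' + α) (hi2 : β * q' + α ≤ (i:ℝ) + 1) :
    ∀ y, β * p' + α - i ≤ y → y < β * q' + α - i →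
      ∃ x, p' ≤ x ∧ x < q' ∧ F α β x = y := by
  intro y hy1 hy2
  have hβ0 : (0:ℝ) < β := by linarith
  refine ⟨(y + i - α) / β, ?_, ?_, ?_⟩
  · rw [le_div_iff₀ hβ0]; nlinarith
  · rw [div_lt_iff₀ hβ0]; nlinarith
  · have hx : β * ((y + i - α) / β) + α = y + i := by field_simp; ring
    rw [F, hx, Int.fract]
    have hfl : ⌊y + (i:ℝ)⌋ = i := by
      rw [Int.floor_eq_iff]
      constructor
      · nlinarith
      · push_cast; nlinarith
    rw [hfl]
    ring

lemma grow {p q : ℝ} (hp : 0 ≤ p) (hq : q ≤ 1) (hpq : p < q) :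
    ∃ p' q', 0 ≤ p' ∧ q' ≤ 1 ∧
      (∀ y, p' ≤ y → y < q' → ∃ x, p ≤ x ∧ x < q ∧ F α β x = y) ∧
      ((p' = 0 ∧ q' = 1) ∨ (β / 2 * (q - p) ≤ q' - p')) := by
  have hβ0 : (0:ℝ) < β := by linarith
  set i0 := ⌊β * p + α⌋ with hi0
  have hfl1 : (i0:ℝ) ≤ β * p + α := Int.floor_le _
  have hfl2 : β * p + α < (i0:ℝ) + 1 := Int.lt_floor_add_one _
  set u := ((i0:ℝ) + 1 - α) / β with hu
  have hβu : β * u + α = (i0:ℝ) + 1 := by rw [hu]; field_simp; ring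
  have hpu : p < u := by rw [hu, lt_div_iff₀ hβ0]; nlinarith
  have honeβ : β * (1/β) = 1 := by field_simp
  rcases le_or_gt q u with hcase | hcase
  · -- single cell
    refine ⟨β * p + α - i0, β * q + α - i0, by linarith, by nlinarith, ?_,
      Or.inr (by nlinarith)⟩
    exact cellmap hα0 hβ hp hq hfl1 (by nlinarith)
  · rcases le_or_gt (u + 1/β) q with hcase2 | hcase2
    · -- full cell [u, u + 1/β) inside [p, q)
      have hcell : β * (u + 1/β) + α = (i0:ℝ) + 2 := by
        rw [mul_add, honeβ]
        linarith [hβu]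
      have hu0 : 0 ≤ u := le_trans hp (le_of_lt hpu)
      have hu1 : u + 1/β ≤ 1 := le_trans hcase2 hq
      refine ⟨0, 1, le_refl 0, le_refl 1, ?_, Or.inl ⟨rfl, rfl⟩⟩
      intro y hy0 hy1
      obtain ⟨x, hx1, hx2, hx3⟩ :=
        cellmap hα0 hβ (i := i0 + 1) hu0 hu1 (by push_cast; linarith [hβu])
          (by push_cast; linarith [hcell]) y (by push_cast; linarith [hβu])
          (by push_cast; linarith [hcell])
      exact ⟨x, le_trans (le_of_lt hpu) hx1, lt_of_lt_of_le hx2 hcase2, hx3⟩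
    · rcases le_or_gt ((q - p) / 2) (u - p) with hpiece | hpiece
      · -- left piece [p, u)
        have hu1 : u ≤ 1 := le_trans (le_of_lt hcase) hq
        refine ⟨β * p + α - i0, β * u + α - i0, by linarith,
          by rw [hβu]; linarith, ?_, Or.inr (by nlinarith)⟩
        intro y hy1 hy2
        obtain ⟨x, hx1, hx2, hx3⟩ :=
          cellmap hα0 hβ hp hu1 hfl1 (le_of_eq hβu) y hy1 hy2
        exact ⟨x, hx1, lt_of_lt_of_le hx2 (le_of_lt hcase), hx3⟩
      · -- right piece [u, q)
        have hu0 : 0 ≤ u := le_trans hp (le_of_lt hpu)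
        have hq2 : β * q + α ≤ (i0:ℝ) + 2 := by
          have : β * q < β * (u + 1/β) := by nlinarith
          rw [mul_add, honeβ] at this
          linarith [hβu]
        refine ⟨β * u + α - (i0 + 1), β * q + α - (i0 + 1), by rw [hβu]; push_cast; linarith,
          by push_cast; linarith, ?_, Or.inr (by rw [hβu]; push_cast; nlinarith)⟩
        intro y hy1 hy2
        obtain ⟨x, hx1, hx2, hx3⟩ :=
          cellmap hα0 hβ (i := i0 + 1) hu0 hq (by push_cast; linarith [hβu])
            (by push_cast; linarith) y (by push_cast at hy1 ⊢; linarith)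
            (by push_cast at hy2 ⊢; linarith)
        exact ⟨x, le_trans (le_of_lt hpu) hx1, hx2, hx3⟩

lemma reach_one (hα1 : α < 1) (y : ℝ) (hy0 : 0 ≤ y) (hy1 : y < 1) :
    ∃ x, 0 ≤ x ∧ x < 1 ∧ F α β x = y := by
  refine ⟨(y + 1 - α) / β, ?_, ?_, ?_⟩
  · have hβ0 : (0:ℝ) < β := by linarith
    rw [le_div_iff₀ hβ0]; nlinarith
  · have hβ0 : (0:ℝ) < β := by linarith
    rw [div_lt_iff₀ hβ0]; nlinarith
  · have hβ0 : (0:ℝ) < β := by linarith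
    have hx : β * ((y + 1 - α) / β) + α = y + 1 := by field_simp; ring
    rw [F, hx, Int.fract]
    have hfl : ⌊y + (1:ℝ)⌋ = (1:ℤ) := by
      rw [Int.floor_eq_iff]
      constructor
      · push_cast; linarith
      · push_cast; linarith
    rw [hfl]
    push_cast
    ring

lemma reach_full (hα1 : α < 1) : ∀ m : ℕ, ∀ y : ℝ, 0 ≤ y → y < 1 →
    ∃ x, 0 ≤ x ∧ x < 1 ∧ (F α β)^[m + 1] x = y := by
  intro m
  induction m with
  | zero =>
    intro y hy0 hy1
    obtain ⟨x, h1, h2, h3⟩ := reach_one hα0 hβ hα1 y hy0 hy1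
    exact ⟨x, h1, h2, by simpa using h3⟩
  | succ m ih =>
    intro y hy0 hy1
    obtain ⟨z, hz0, hz1, hz2⟩ := reach_one hα0 hβ hα1 y hy0 hy1
    obtain ⟨x, hx0, hx1, hx2⟩ := ih z hz0 hz1
    exact ⟨x, hx0, hx1, by rw [Function.iterate_succ_apply', hx2, hz2]⟩

lemma cover_main (hα1 : α < 1) : ∀ k : ℕ, ∀ p q : ℝ, 0 ≤ p → q ≤ 1 → 1 ≤ (β/2)^k * (q - p) →
    ∀ y : ℝ, 0 ≤ y → y < 1 → ∃ x, p ≤ x ∧ x < q ∧ (F α β)^[k + 1] x = y := by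
  intro k
  induction k with
  | zero =>
    intro p q hp hq hgap y hy0 hy1
    simp only [pow_zero, one_mul] at hgap
    have hp0 : p = 0 := by linarith
    have hq1 : q = 1 := by linarith
    subst hp0; subst hq1
    obtain ⟨x, h1, h2, h3⟩ := reach_one hα0 hβ hα1 y hy0 hy1
    exact ⟨x, h1, h2, by simpa using h3⟩
  | succ k ih =>
    intro p q hp hq hgap y hy0 hy1
    have hβ0 : (0:ℝ) < β := by linarith
    have hpow : (0:ℝ) < (β/2)^(k+1) := by positivity
    have hpq : p < q := by nlinarith
    obtain ⟨p', q', hp', hq', hacc, hgrow⟩ := grow hα0 hβ hp hq hpq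
    rcases hgrow with ⟨rfl, rfl⟩ | hlen
    · obtain ⟨x', hx'0, hx'1, hx'2⟩ := reach_full hα0 hβ hα1 k y hy0 hy1
      obtain ⟨x, hx1, hx2, hx3⟩ := hacc x' hx'0 hx'1
      exact ⟨x, hx1, hx2, by rw [Function.iterate_succ_apply, hx3, hx'2]⟩
    · have hgap' : 1 ≤ (β/2)^k * (q' - p') := by
        have h1 : (β/2)^(k+1) * (q - p) = (β/2)^k * (β/2 * (q - p)) := by ring
        rw [h1] at hgap
        have hk0 : (0:ℝ) < (β/2)^k := by positivity
        nlinarith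
      obtain ⟨x', hx'1, hx'2, hx'3⟩ := ih p' q' hp' hq' hgap' y hy0 hy1
      obtain ⟨x, hx1, hx2, hx3⟩ := hacc x' hx'1 hx'2
      exact ⟨x, hx1, hx2, by rw [Function.iterate_succ_apply, hx3, hx'3]⟩

end Cover

/-! ### Part 8: gluing -/

lemma getD_ofFn {n : ℕ} (f : Fin n → ℕ) {i : ℕ} (hi : i < n) :
    (List.ofFn f).getD i 0 = f ⟨i, hi⟩ := by
  rw [List.getD_eq_getElem _ _ (by simpa using hi), List.getElem_ofFn]

section Glue
variable {α β : ℝ} (hα0 : 0 ≤ α) (hα1 : α < 1) (hβ : 2 < β)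
include hα0 hα1 hβ

lemma glue2 {δ : ℝ} (hδ : 0 < δ)
    (hgap : ∀ w : List ℕ, inLang α β w → δ ≤ (PQ α β w).2 - (PQ α β w).1)
    {k : ℕ} (hk : 1 ≤ (β/2)^k * δ) :
    ∀ W w' : List ℕ, inLang α β W → inLang α β w' →
      ∃ u : List ℕ, u.length = k + 1 ∧ inLang α β u ∧ inLang α β (W ++ u ++ w') := by
  intro W w' hW hw'
  have hβ0 : (0:ℝ) < β := by linarith
  have hbounds := PQ_bounds (α := α) (β := β) W
  have hgapW := hgap W hW
  obtain ⟨t', ht', hpre'⟩ := (inLang_iff w').1 hw'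
  obtain ⟨x, hx1, hx2, hx3⟩ := cover_main hα0 hβ hα1 k (PQ α β W).1 (PQ α β W).2
    hbounds.1 hbounds.2 (by nlinarith) t' ht'.1 ht'.2
  have hxI : x ∈ Set.Ico (0:ℝ) 1 :=
    ⟨le_trans hbounds.1 hx1, lt_of_lt_of_le hx2 hbounds.2⟩
  obtain ⟨t, ht, hpreW, hFt⟩ := claimA_bwd hα0 hβ0 W x hx1 hx2
  set u := List.ofFn (fun i : Fin (k+1) => Om α β x i.1) with hu
  have hulen : u.length = k + 1 := by simp [hu]
  have huget : ∀ i, (hi : i < k + 1) → u.getD i 0 = Om α β x i := by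
    intro i hi
    rw [hu, getD_ofFn _ hi]
  refine ⟨u, hulen, ?_, ?_⟩
  · rw [inLang_iff]
    refine ⟨x, hxI, ?_⟩
    intro i hi
    rw [hulen] at hi
    rw [huget i hi]
  · rw [inLang_iff]
    refine ⟨t, ht, ?_⟩
    intro i hi
    have hlen2 : (W ++ u ++ w').length = W.length + (k + 1) + w'.length := by
      simp [hulen]
      omega
    rcases Nat.lt_or_ge i W.length with h1 | h1
    · rw [List.getD_append _ _ _ _ (show i < (W ++ u).length by simp; omega),
        List.getD_append _ _ _ _ h1]
      exact hpreW i h1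
    · rcases Nat.lt_or_ge i (W.length + (k + 1)) with h2 | h2
      · rw [List.getD_append _ _ _ _ (show i < (W ++ u).length by simp [hulen]; omega),
          List.getD_append_right W u 0 i h1, huget (i - W.length) (by omega)]
        have heq : i = W.length + (i - W.length) := by omega
        have hOm : Om α β t i = Om α β x (i - W.length) := by
          conv_lhs => rw [heq]
          rw [Om_add, hFt]
        exact hOm
      · rw [List.getD_append_right (W ++ u) w' 0 i (by simp [hulen]; omega)]
        have heq : i = W.length + ((k + 1) + (i - W.length - (k + 1))) := by omega
        have hOm : Om α β t i = Om α β t' (i - W.length - (k + 1)) := by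
          conv_lhs => rw [heq]
          rw [Om_add, hFt, Om_add, hx3]
        have hidx : i - W.length - (k + 1) < w'.length := by
          rw [hlen2] at hi
          omega
        have hidx2 : i - (W ++ u).length = i - W.length - (k + 1) := by
          simp [hulen]
          omega
        rw [hidx2, hOm, hpre' _ hidx]

end Glue

lemma glue_zero (w : Fin 1 → List ℕ) (v : Fin 0 → List ℕ) :
    glue w v = w (Fin.last 0) := by
  simp [glue]

lemma glue_snoc {n : ℕ} (w : Fin (n + 2) → List ℕ) (v : Fin n → List ℕ) (u : List ℕ) :
    glue w (Fin.snoc v u) =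
      glue (fun i => w i.castSucc) v ++ u ++ w (Fin.last (n + 1)) := by
  unfold glue
  rw [List.ofFn_succ']
  simp only [Fin.snoc_castSucc, Fin.snoc_last]
  rw [List.concat_eq_append, List.flatten_append]
  simp [List.append_assoc]

section SpecAssemble
variable {α β : ℝ} (hα0 : 0 ≤ α) (hα1 : α < 1) (hβ : 2 < β)
include hα0 hα1 hβ

lemma spec_of_bounded (hD1 : BddAbove (D (Om α β 0) (bdig α β)))
    (hD2 : BddAbove (D (bdig α β) (Om α β 0))) :
    HasSpec (inLang α β) (inLang α β) := by
  have hβ0 : (0:ℝ) < β := by linarith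
  have hβ1 : (1:ℝ) ≤ β := by linarith
  obtain ⟨δ, hδ, hgap⟩ := PQ_gap hα0 hβ0 hβ1 hD1 hD2
  obtain ⟨k, hk⟩ := pow_unbounded_of_one_lt (1/δ) (show (1:ℝ) < β/2 by linarith)
  have hk' : 1 ≤ (β/2)^k * δ := by
    have h1 : 1 < (β/2)^k * δ := by
      have := (div_lt_iff₀ hδ).1 hk
      linarith
    linarith
  refine ⟨k + 1, by omega, ?_⟩
  intro n
  induction n with
  | zero =>
    intro w hw
    refine ⟨fun i => i.elim0, fun i => i.elim0, ?_⟩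
    rw [glue_zero]
    exact hw _
  | succ n ih =>
    intro w hw
    obtain ⟨v', hv', hglue⟩ := ih (fun i => w i.castSucc) (fun i => hw _)
    obtain ⟨u, hul, huL, hWu⟩ := glue2 hα0 hα1 hβ hδ hgap hk'
      (glue (fun i => w i.castSucc) v') (w (Fin.last (n + 1))) hglue (hw _)
    refine ⟨Fin.snoc v' u, ?_, ?_⟩
    · intro i
      refine Fin.lastCases ?_ ?_ i
      · rw [Fin.snoc_last]
        exact ⟨hul, huL⟩
      · intro j
        rw [Fin.snoc_castSucc]
        exact hv' j
    · rw [glue_snoc]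
      exact hWu

end SpecAssemble

/-! ### Part 5: specification implies boundedness -/

lemma glue_one (w : Fin 2 → List ℕ) (v : Fin 1 → List ℕ) :
    glue w v = w 0 ++ v 0 ++ w 1 := by
  unfold glue
  rw [List.ofFn_succ]
  simp [Fin.last]

section Forward
variable {α β : ℝ} (hα0 : 0 ≤ α) (hα1 : α < 1) (hβ : 2 < β)

lemma pre_mem_lang {x : ℕ → ℕ} (hx : x ∈ Sig α β) (m : ℕ) :
    inLang α β (List.ofFn fun i : Fin m => x i.1) := by
  refine ⟨x, hx, ?_⟩
  intro i
  rw [List.get_eq_getElem, List.getElem_ofFn]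

lemma lang_elem {w : List ℕ} (h : inLang α β w) :
    ∃ x ∈ Sig α β, ∀ i < w.length, x i = w.getD i 0 := by
  obtain ⟨x, hx, hagree⟩ := h
  refine ⟨x, hx, fun i hi => ?_⟩
  rw [List.getD_eq_getElem _ _ hi]
  have := hagree ⟨i, hi⟩
  rw [List.get_eq_getElem] at this
  exact this

include hα0 hα1 hβ

lemma zero_word_lang : inLang α β [0] := by
  have h0 : Om α β 0 0 = 0 := by
    unfold Om
    simp only [Function.iterate_zero_apply, mul_zero, zero_add]
    rw [Int.floor_eq_zero_iff.2 ⟨hα0, hα1⟩]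
    rfl
  refine ⟨Om α β 0, Om_mem_Sig zero_mem_Ico, ?_⟩
  intro i
  fin_cases i
  simpa using h0

lemma one_word_lang : inLang α β [1] := by
  have hβ0 : (0:ℝ) < β := by linarith
  have htI : (1 - α)/β ∈ Set.Ico (0:ℝ) 1 := by
    constructor
    · exact div_nonneg (by linarith) (by linarith)
    · rw [div_lt_one hβ0]; linarith
  have h0 : Om α β ((1 - α)/β) 0 = 1 := by
    unfold Om
    simp only [Function.iterate_zero_apply]
    have : β * ((1 - α)/β) + α = 1 := by field_simp; ring
    rw [this]
    norm_num
  refine ⟨Om α β ((1 - α)/β), Om_mem_Sig htI, ?_⟩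
  intro i
  fin_cases i
  simpa using h0

lemma bddAbove_D2_of_spec (b : ℕ → ℕ) (hb : b ∈ Sig α β)
    (hbsup : ∀ x ∈ Sig α β, lexLe x b)
    (hspec : HasSpec (inLang α β) (inLang α β)) : BddAbove (D b (Om α β 0)) := by
  by_contra hnb
  rw [not_bddAbove_iff'] at hnb
  obtain ⟨τ, hτ1, hglue⟩ := hspec
  obtain ⟨n, hn, hnτ⟩ := hnb τ
  have hnτ' : τ < n := by omega
  obtain ⟨j, hocc⟩ := hn
  set d : ℕ := if Om α β 0 τ = 0 then 1 else 0 with hd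
  have hdne : d ≠ Om α β 0 τ := by
    rw [hd]; split <;> omega
  have hdl : inLang α β [d] := by
    rw [hd]; split
    · exact one_word_lang hα0 hα1 hβ
    · exact zero_word_lang hα0 hα1 hβ
  set u : List ℕ := List.ofFn (fun i : Fin j => b i.1) with hu
  have hul : inLang α β u := pre_mem_lang hb j
  obtain ⟨v, hv, hL⟩ := hglue 1 ![u, [d]] (by
    intro i
    fin_cases i
    · exact hul
    · exact hdl)
  rw [glue_one] at hL
  simp only [Matrix.cons_val_zero, Matrix.cons_val_one, Matrix.head_cons] at hL
  obtain ⟨x, hxS, hxa⟩ := lang_elem hL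
  have hulen : u.length = j := by simp [hu]
  have hvlen : (v 0).length = τ := (hv 0).1
  have hLlen : (u ++ v 0 ++ [d]).length = j + τ + 1 := by simp [hulen, hvlen]; omega
  have hxb : ∀ i < j, x i = b i := by
    intro i hi
    have h := hxa i (by rw [hLlen]; omega)
    rw [List.getD_append _ _ _ _ (by simp [hulen, hvlen]; omega),
      List.getD_append _ _ _ _ (by omega : i < u.length)] at h
    rw [h, hu, getD_ofFn _ (by omega : i < j)]
  have hxd : x (j + τ) = d := by
    have h := hxa (j + τ) (by rw [hLlen]; omega)
    rw [List.getD_append_right (u ++ v 0) [d] 0 (j + τ)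
      (by simp [hulen, hvlen])] at h
    have hidx : j + τ - (u ++ v 0).length = 0 := by simp [hulen, hvlen]
    rw [hidx] at h
    simpa using h
  have hshift_mem := shift_iter_mem_Sig hxS j
  have hfun : shift^[j] x = fun m => x (j + m) := funext fun m => shift_iter_apply x j m
  have hβ0 : (0:ℝ) < β := by linarith
  have hlo : lexLe (Om α β 0) (fun m => x (j + m)) := by
    rw [← hfun]
    exact a_min hα0 hβ0 _ hshift_mem
  have hhi : lexLe (fun m => x (j + m)) (fun m => b (j + m)) :=
    lex_shift (hbsup x hxS) hxb
  have hagree : ∀ i < n, Om α β 0 i = (fun m => b (j + m)) i := fun i hi => hocc i hi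
  have hforced := lex_squeeze hlo hhi hagree
  have hres := hforced τ hnτ'
  rw [hxd] at hres
  exact hdne hres

lemma bddAbove_D1_of_spec (b : ℕ → ℕ) (hb : b ∈ Sig α β)
    (hbsup : ∀ x ∈ Sig α β, lexLe x b)
    (hspec : HasSpec (inLang α β) (inLang α β)) : BddAbove (D (Om α β 0) b) := by
  by_contra hnb
  rw [not_bddAbove_iff'] at hnb
  obtain ⟨τ, hτ1, hglue⟩ := hspec
  obtain ⟨n, hn, hnτ⟩ := hnb τ
  have hnτ' : τ < n := by omega
  obtain ⟨j, hocc⟩ := hn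
  set d : ℕ := if b τ = 0 then 1 else 0 with hd
  have hdne : d ≠ b τ := by
    rw [hd]; split <;> omega
  have hdl : inLang α β [d] := by
    rw [hd]; split
    · exact one_word_lang hα0 hα1 hβ
    · exact zero_word_lang hα0 hα1 hβ
  set u : List ℕ := List.ofFn (fun i : Fin j => Om α β 0 i.1) with hu
  have hul : inLang α β u := pre_mem_lang (Om_mem_Sig zero_mem_Ico) j
  obtain ⟨v, hv, hL⟩ := hglue 1 ![u, [d]] (by
    intro i
    fin_cases i
    · exact hul
    · exact hdl)
  rw [glue_one] at hL
  simp only [Matrix.cons_val_zero, Matrix.cons_val_one, Matrix.head_cons] at hL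
  obtain ⟨x, hxS, hxa⟩ := lang_elem hL
  have hulen : u.length = j := by simp [hu]
  have hvlen : (v 0).length = τ := (hv 0).1
  have hLlen : (u ++ v 0 ++ [d]).length = j + τ + 1 := by simp [hulen, hvlen]; omega
  have hxb : ∀ i < j, x i = Om α β 0 i := by
    intro i hi
    have h := hxa i (by rw [hLlen]; omega)
    rw [List.getD_append _ _ _ _ (by simp [hulen, hvlen]; omega),
      List.getD_append _ _ _ _ (by omega : i < u.length)] at h
    rw [h, hu, getD_ofFn _ (by omega : i < j)]
  have hxd : x (j + τ) = d := by
    have h := hxa (j + τ) (by rw [hLlen]; omega)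
    rw [List.getD_append_right (u ++ v 0) [d] 0 (j + τ)
      (by simp [hulen, hvlen])] at h
    have hidx : j + τ - (u ++ v 0).length = 0 := by simp [hulen, hvlen]
    rw [hidx] at h
    simpa using h
  have hshift_mem := shift_iter_mem_Sig hxS j
  have hfun : shift^[j] x = fun m => x (j + m) := funext fun m => shift_iter_apply x j m
  have hβ0 : (0:ℝ) < β := by linarith
  have hlo : lexLe (fun m => Om α β 0 (j + m)) (fun m => x (j + m)) :=
    lex_shift (a_min hα0 hβ0 x hxS) (fun i hi => (hxb i hi).symm)
  have hhi : lexLe (fun m => x (j + m)) b := by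
    rw [← hfun]
    exact hbsup _ hshift_mem
  have hagree : ∀ i < n, (fun m => Om α β 0 (j + m)) i = b i := fun i hi => (hocc i hi).symm
  have hforced := lex_squeeze hlo hhi hagree
  have hres := hforced τ hnτ'
  rw [hxd] at hres
  have hocct := hocc τ hnτ'
  rw [← hocct] at hres
  exact hdne hres

end Forward

/-- **Theorem (specification characterization).** For `0 ≤ α < 1` and `β > 2`, the
subshift `Σ` has specification if and only if the sets `𝖣(a)` and `𝖣(b)` are both
bounded, where `a = Ω(0)` and `b` is the lexicographic supremum of `Σ`. -/
theorem specification_iff_bounded (α β : ℝ) (hα0 : 0 ≤ α) (hα1 : α < 1) (hβ : 2 < β)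
    (b : ℕ → ℕ) (hb : b ∈ Sig α β) (hbsup : ∀ x ∈ Sig α β, lexLe x b) :
    HasSpec (inLang α β) (inLang α β) ↔
      BddAbove (D (Om α β 0) b) ∧ BddAbove (D b (Om α β 0)) := by
  have hβ0 : (0:ℝ) < β := by linarith
  have hbeq : b = bdig α β :=
    lex_antisymm (sig_le_bdig hα0 hβ0 b hb) (hbsup (bdig α β) (bdig_mem_Sig hα0 hβ0))
  constructor
  · intro hspec
    exact ⟨bddAbove_D1_of_spec hα0 hα1 hβ b hb hbsup hspec,
      bddAbove_D2_of_spec hα0 hα1 hβ b hb hbsup hspec⟩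
  · rintro ⟨h1, h2⟩
    rw [hbeq] at h1 h2
    exact spec_of_bounded hα0 hα1 hβ h1 h2

end IntermediateBeta
end
end

section
/- For every real β > 2, the set of α ∈ [0,1) for which D(a) is bounded is dense in [0,1). -/
noncomputable section

namespace IntermediateBeta

/-! ### Auxiliary lemmas for the proof -/

lemma iter_mem_Ico (α β x : ℝ) (hx : x ∈ Set.Ico (0:ℝ) 1) (n : ℕ) :
    (F α β)^[n] x ∈ Set.Ico (0:ℝ) 1 := by
  cases n with
  | zero => exact hx
  | succ n =>
    rw [Function.iterate_succ_apply']
    exact ⟨Int.fract_nonneg _, Int.fract_lt_one _⟩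

lemma om_shift (α β x : ℝ) (r i : ℕ) :
    Om α β x (r + i) = Om α β ((F α β)^[r] x) i := by
  show (⌊β * ((F α β)^[r+i] x) + α⌋).toNat = (⌊β * ((F α β)^[i] ((F α β)^[r] x)) + α⌋).toNat
  rw [Nat.add_comm r i, Function.iterate_add_apply]

/-- Uniform bound on digits of points of `[0,1)`. -/
lemma om_le (α β : ℝ) (hβ0 : 0 < β) (hα1 : α < 1) (x : ℝ) (hx : x ∈ Set.Ico (0:ℝ) 1)
    (n : ℕ) : Om α β x n ≤ ⌈β + 1⌉₊ := by
  have ht := iter_mem_Ico α β x hx n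
  have h1 : β * ((F α β)^[n] x) + α ≤ (⌈β + 1⌉₊ : ℝ) := by
    have h2 : β * ((F α β)^[n] x) ≤ β * 1 := by
      apply mul_le_mul_of_nonneg_left (le_of_lt ht.2) (le_of_lt hβ0)
    have h3 : β + 1 ≤ (⌈β + 1⌉₊ : ℝ) := Nat.le_ceil _
    linarith
  rw [show Om α β x n = (⌊β * ((F α β)^[n] x) + α⌋).toNat from rfl]
  rw [Int.toNat_le]
  have h2 := Int.floor_le_floor h1
  rwa [Int.floor_natCast] at h2

lemma sig_le (α β : ℝ) (hβ0 : 0 < β) (hα1 : α < 1) :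
    ∀ g ∈ Sig α β, ∀ n, g n ≤ ⌈β + 1⌉₊ := by
  have hsub : Sig α β ⊆ {g : ℕ → ℕ | ∀ n, g n ≤ ⌈β + 1⌉₊} := by
    apply closure_minimal
    · rintro g ⟨x, hx, rfl⟩ n
      exact om_le α β hβ0 hα1 x hx n
    · have he : {g : ℕ → ℕ | ∀ n, g n ≤ ⌈β + 1⌉₊} =
          ⋂ n, (fun g : ℕ → ℕ => g n) ⁻¹' (Set.Iic ⌈β + 1⌉₊) := by
        ext g; simp [Set.mem_iInter]
      rw [he]
      exact isClosed_iInter fun n => (isClosed_discrete _).preimage (continuous_apply n)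
  exact fun g hg n => hsub hg n

/-- Nested sets used to build the lexicographic maximum of `Sig`. -/
def SnSet (α β : ℝ) : ℕ → Set (ℕ → ℕ)
  | 0 => Sig α β
  | n+1 => {x | x ∈ SnSet α β n ∧ x n = sSup ((fun y : ℕ → ℕ => y n) '' SnSet α β n)}

/-- The lexicographic maximum of `Sig`. -/
def bmax (α β : ℝ) (n : ℕ) : ℕ := sSup ((fun y : ℕ → ℕ => y n) '' SnSet α β n)

lemma SnSet_subset (α β : ℝ) : ∀ n, SnSet α β n ⊆ Sig α β := by
  intro n
  induction n with
  | zero => exact fun x hx => hx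
  | succ n ih => exact fun x hx => ih hx.1

lemma SnSet_bdd (α β : ℝ) (hβ0 : 0 < β) (hα1 : α < 1) (n : ℕ) :
    BddAbove ((fun y : ℕ → ℕ => y n) '' SnSet α β n) := by
  refine ⟨⌈β + 1⌉₊, ?_⟩
  rintro v ⟨x, hx, rfl⟩
  exact sig_le α β hβ0 hα1 x (SnSet_subset α β n hx) n

lemma SnSet_nonempty (α β : ℝ) (hβ0 : 0 < β) (hα1 : α < 1) :
    ∀ n, (SnSet α β n).Nonempty := by
  intro n
  induction n with
  | zero =>
    exact ⟨Om α β 0, subset_closure ⟨0, ⟨le_refl 0, zero_lt_one⟩, rfl⟩⟩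
  | succ n ih =>
    have him : ((fun y : ℕ → ℕ => y n) '' SnSet α β n).Nonempty := ih.image _
    have := Nat.sSup_mem him (SnSet_bdd α β hβ0 hα1 n)
    obtain ⟨x, hx, hxn⟩ := this
    exact ⟨x, hx, hxn⟩

lemma SnSet_spec (α β : ℝ) : ∀ n, ∀ x ∈ SnSet α β n, ∀ i < n, x i = bmax α β i := by
  intro n
  induction n with
  | zero => exact fun x _ i hi => absurd hi (Nat.not_lt_zero i)
  | succ n ih =>
    rintro x ⟨hx, hxn⟩ i hi
    rcases Nat.lt_succ_iff_lt_or_eq.1 hi with h | h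
    · exact ih x hx i h
    · subst h; exact hxn

lemma bmax_mem (α β : ℝ) (hβ0 : 0 < β) (hα1 : α < 1) : bmax α β ∈ Sig α β := by
  have hne := SnSet_nonempty α β hβ0 hα1
  have hseq : ∀ n : ℕ, (hne (n+1)).choose ∈ SnSet α β (n+1) := fun n => (hne (n+1)).choose_spec
  have hcl : IsClosed (Sig α β) := isClosed_closure
  have htend : Filter.Tendsto (fun n => (hne (n+1)).choose) Filter.atTop (nhds (bmax α β)) := by
    rw [tendsto_pi_nhds]
    intro i
    apply Filter.Tendsto.congr' _ (tendsto_const_nhds (x := bmax α β i))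
    rw [Filter.eventuallyEq_iff_exists_mem]
    refine ⟨Set.Ici i, Filter.mem_atTop i, fun n hn => ?_⟩
    exact (SnSet_spec α β (n+1) _ (hseq n) i (Nat.lt_succ_of_le hn)).symm
  exact hcl.mem_of_tendsto htend
    (Filter.Eventually.of_forall fun n => SnSet_subset α β (n+1) (hseq n))

lemma bmax_max (α β : ℝ) (hβ0 : 0 < β) (hα1 : α < 1) :
    ∀ x ∈ Sig α β, lexLe x (bmax α β) := by
  classical
  intro x hx
  by_cases hxb : x = bmax α β
  · exact Or.inl hxb
  · have hex : ∃ k, x k ≠ bmax α β k := by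
      by_contra hc
      push_neg at hc
      exact hxb (funext hc)
    right
    refine ⟨Nat.find hex, fun i hi => not_not.1 (Nat.find_min hex hi), ?_⟩
    have hmem : ∀ i ≤ Nat.find hex, x ∈ SnSet α β i := by
      intro i
      induction i with
      | zero => exact fun _ => hx
      | succ i ih =>
        intro hik
        have hik' : i < Nat.find hex := Nat.lt_of_lt_of_le (Nat.lt_succ_self i) hik
        exact ⟨ih (le_of_lt hik'), not_not.1 (Nat.find_min hex hik')⟩
    have hle : x (Nat.find hex) ≤ bmax α β (Nat.find hex) := by
      apply le_csSup (SnSet_bdd α β hβ0 hα1 _)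
      exact ⟨x, hmem _ le_rfl, rfl⟩
    exact lt_of_le_of_ne hle (Nat.find_spec hex)

/-- Key lemma: no itinerary of an actual point is lexicographically maximal; one can
always strictly beat it by perturbing the point upwards. -/
lemma exists_lex_gt (α β : ℝ) (hα0 : 0 ≤ α) (hβ : 2 < β) (y : ℝ) (hy : y ∈ Set.Ico (0:ℝ) 1) :
    ∃ x ∈ Set.Ico (0:ℝ) 1, ∃ k, (∀ i < k, Om α β x i = Om α β y i) ∧
      Om α β y k < Om α β x k := by
  classical
  have hβ0 : (0:ℝ) < β := by linarith
  have hβ1 : (1:ℝ) < β := by linarith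
  set η : ℝ := (1 - y) / 2 with hηdef
  have hη0 : 0 < η := by simp only [hηdef]; linarith [hy.2]
  set x : ℝ := y + η with hxdef
  have hx : x ∈ Set.Ico (0:ℝ) 1 := by
    constructor
    · have := hy.1; simp only [hxdef]; linarith
    · simp only [hxdef, hηdef]; linarith [hy.2]
  have hP : ∃ i, ¬(⌊β * ((F α β)^[i] y) + α + β ^ (i+1) * η⌋ = ⌊β * ((F α β)^[i] y) + α⌋) := by
    obtain ⟨i, hi⟩ := pow_unbounded_of_one_lt (1/η) hβ1
    have h1 : 1 < β ^ i * η := by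
      rw [div_lt_iff₀ hη0] at hi; linarith
    have h2 : (1:ℝ) ≤ β ^ (i+1) * η := by
      rw [pow_succ]
      nlinarith [pow_pos hβ0 i]
    refine ⟨i, fun heq => ?_⟩
    have h3 : ⌊β * ((F α β)^[i] y) + α + 1⌋ ≤ ⌊β * ((F α β)^[i] y) + α + β ^ (i+1) * η⌋ :=
      Int.floor_le_floor (by linarith)
    rw [Int.floor_add_one] at h3
    omega
  set k := Nat.find hP with hkdef
  have hk : ¬(⌊β * ((F α β)^[k] y) + α + β ^ (k+1) * η⌋ = ⌊β * ((F α β)^[k] y) + α⌋) :=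
    Nat.find_spec hP
  have hQ : ∀ i < k, ⌊β * ((F α β)^[i] y) + α + β ^ (i+1) * η⌋ = ⌊β * ((F α β)^[i] y) + α⌋ :=
    fun i hi => not_not.1 (Nat.find_min hP hi)
  have harg : ∀ i : ℕ, β * ((F α β)^[i] y + β ^ i * η) + α =
      β * ((F α β)^[i] y) + α + β ^ (i+1) * η := by
    intro i; rw [pow_succ]; ring
  have hiter : ∀ i ≤ k, (F α β)^[i] x = (F α β)^[i] y + β ^ i * η := by
    intro i
    induction i with
    | zero => intro _; simp [hxdef]
    | succ i ih =>
      intro hik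
      have hik' : i < k := Nat.lt_of_lt_of_le (Nat.lt_succ_self i) hik
      rw [Function.iterate_succ_apply', Function.iterate_succ_apply', ih (le_of_lt hik')]
      show Int.fract (β * ((F α β)^[i] y + β ^ i * η) + α) =
        Int.fract (β * ((F α β)^[i] y) + α) + β ^ (i+1) * η
      rw [harg i]
      rw [show ∀ z : ℝ, Int.fract z = z - ⌊z⌋ from fun z => rfl,
        show ∀ z : ℝ, Int.fract z = z - ⌊z⌋ from fun z => rfl, hQ i hik']
      ring
  refine ⟨x, hx, k, ?_, ?_⟩
  · intro i hi
    show (⌊β * ((F α β)^[i] x) + α⌋).toNat = (⌊β * ((F α β)^[i] y) + α⌋).toNat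
    rw [hiter i (le_of_lt hi), harg i, hQ i hi]
  · show (⌊β * ((F α β)^[k] y) + α⌋).toNat < (⌊β * ((F α β)^[k] x) + α⌋).toNat
    rw [hiter k le_rfl, harg k]
    have ht := iter_mem_Ico α β y hy k
    have h0 : (0:ℤ) ≤ ⌊β * ((F α β)^[k] y) + α⌋ := by
      apply Int.floor_nonneg.2
      have : 0 ≤ β * ((F α β)^[k] y) := mul_nonneg (le_of_lt hβ0) ht.1
      linarith
    have hge : ⌊β * ((F α β)^[k] y) + α⌋ ≤ ⌊β * ((F α β)^[k] y) + α + β ^ (k+1) * η⌋ := by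
      apply Int.floor_le_floor
      have : (0:ℝ) ≤ β ^ (k+1) * η := mul_nonneg (le_of_lt (pow_pos hβ0 _)) (le_of_lt hη0)
      linarith
    have hlt : ⌊β * ((F α β)^[k] y) + α⌋ < ⌊β * ((F α β)^[k] y) + α + β ^ (k+1) * η⌋ :=
      lt_of_le_of_ne hge (Ne.symm hk)
    exact (Int.toNat_lt_toNat (by omega)).2 hlt

/-- Density of parameters for which the orbit of `0` is periodic. -/
lemma dense_periodic (β : ℝ) (hβ : 2 < β) (l : ℝ) (hl : l ∈ Set.Ico (0:ℝ) 1)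
    (ε : ℝ) (hε : 0 < ε) :
    ∃ γ ∈ Set.Ico (0:ℝ) 1, |γ - l| < ε ∧ ∃ p : ℕ, 1 ≤ p ∧ (F γ β)^[p] 0 = 0 := by
  classical
  have hβ0 : (0:ℝ) < β := by linarith
  have hβ1 : (1:ℝ) < β := by linarith
  set δ : ℝ := min ε (1 - l) / 2 with hδdef
  have hδ0 : 0 < δ := by
    have h1 : 0 < min ε (1 - l) := lt_min hε (by linarith [hl.2])
    simp only [hδdef]; linarith
  have hδε : δ < ε := by
    have h1 : min ε (1 - l) ≤ ε := min_le_left _ _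
    simp only [hδdef]; linarith
  have hδl : δ ≤ (1 - l) / 2 := by
    have h1 : min ε (1 - l) ≤ 1 - l := min_le_right _ _
    simp only [hδdef]; linarith
  have hw1 : l + δ < 1 := by linarith [hl.2]
  obtain ⟨n, hn⟩ := pow_unbounded_of_one_lt (1/δ) hβ1
  set sfun : ℕ → ℝ := fun i => ∑ j ∈ Finset.range i, β ^ j with hsdef
  have s_succ : ∀ i, sfun (i+1) = β * sfun i + 1 := fun i => geom_sum_succ
  have s_nonneg : ∀ i, 0 ≤ sfun i := fun i =>
    Finset.sum_nonneg fun j _ => le_of_lt (pow_pos hβ0 j)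
  have s_pos : ∀ i, 0 < sfun (i+1) := by
    intro i; rw [s_succ]
    nlinarith [s_nonneg i]
  have s_lb : ∀ i, β ^ i ≤ sfun (i+1) := by
    intro i
    induction i with
    | zero => simp [hsdef]
    | succ i ih =>
      rw [s_succ]
      have h1 : β * β ^ i ≤ β * sfun (i+1) := by nlinarith [pow_pos hβ0 i]
      rw [pow_succ]
      nlinarith
  have key : ∃ γ ∈ Set.Icc l (l + δ), ∃ p : ℕ, 1 ≤ p ∧ p ≤ n + 1 ∧ (F γ β)^[p] 0 = 0 := by
    by_contra hcon
    push_neg at hcon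
    have main : ∀ i, i ≤ n + 1 → ∀ γ ∈ Set.Icc l (l + δ),
        (F γ β)^[i] (0:ℝ) = (F l β)^[i] (0:ℝ) + sfun i * (γ - l) := by
      intro i
      induction i with
      | zero => intro _ γ _; simp [hsdef]
      | succ i ih =>
        intro hi γ hγ
        have hTi := ih (by omega)
        set A : ℝ := β * ((F l β)^[i] (0:ℝ)) + l with hAdef
        have hB : 0 < sfun (i+1) := s_pos i
        have hfloor : ⌊A + sfun (i+1) * (γ - l)⌋ = ⌊A⌋ := by
          by_contra hne
          have hγl : l ≤ γ := hγ.1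
          have hmono : ⌊A⌋ ≤ ⌊A + sfun (i+1) * (γ - l)⌋ :=
            Int.floor_le_floor (le_add_of_nonneg_right (mul_nonneg (le_of_lt hB) (by linarith)))
          have h3 : ⌊A⌋ + 1 ≤ ⌊A + sfun (i+1) * (γ - l)⌋ := by omega
          have h4 : ((⌊A⌋:ℝ) + 1) ≤ A + sfun (i+1) * (γ - l) := by
            have h5 := Int.floor_le (A + sfun (i+1) * (γ - l))
            have h6 : ((⌊A⌋:ℝ) + 1) ≤ ((⌊A + sfun (i+1) * (γ - l)⌋ : ℤ) : ℝ) := by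
              exact_mod_cast h3
            linarith
          set γs : ℝ := l + ((⌊A⌋:ℝ) + 1 - A) / sfun (i+1) with hγsdef
          have hAlt : A < (⌊A⌋:ℝ) + 1 := Int.lt_floor_add_one A
          have h1 : l < γs := by
            simp only [hγsdef]
            have : 0 < ((⌊A⌋:ℝ) + 1 - A) / sfun (i+1) := div_pos (by linarith) hB
            linarith
          have h2 : γs ≤ γ := by
            have h7 : ((⌊A⌋:ℝ) + 1 - A) / sfun (i+1) ≤ γ - l := by
              rw [div_le_iff₀ hB]
              nlinarith
            simp only [hγsdef]; linarith
          have hγsI : γs ∈ Set.Icc l (l + δ) := ⟨le_of_lt h1, le_trans h2 hγ.2⟩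
          have hiter0 : (F γs β)^[i+1] (0:ℝ) = 0 := by
            rw [Function.iterate_succ_apply', hTi γs hγsI]
            show Int.fract (β * ((F l β)^[i] (0:ℝ) + sfun i * (γs - l)) + γs) = 0
            have hγsl : γs - l = ((⌊A⌋:ℝ) + 1 - A) / sfun (i+1) := by
              simp only [hγsdef]; ring
            have hargs : β * ((F l β)^[i] (0:ℝ) + sfun i * (γs - l)) + γs =
                ((⌊A⌋ + 1 : ℤ) : ℝ) := by
              have e1 : β * ((F l β)^[i] (0:ℝ) + sfun i * (γs - l)) + γs =
                  A + sfun (i+1) * (γs - l) := by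
                rw [s_succ]; simp only [hAdef]; ring
              rw [e1, hγsl, mul_div_cancel₀ _ (ne_of_gt hB)]
              push_cast; ring
            rw [hargs, Int.fract_intCast]
          exact hcon γs hγsI (i+1) (by omega) (by omega) hiter0
        rw [Function.iterate_succ_apply', Function.iterate_succ_apply', hTi γ hγ]
        show Int.fract (β * ((F l β)^[i] (0:ℝ) + sfun i * (γ - l)) + γ) =
          Int.fract (β * ((F l β)^[i] (0:ℝ)) + l) + sfun (i+1) * (γ - l)
        have e1 : β * ((F l β)^[i] (0:ℝ) + sfun i * (γ - l)) + γ =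
            A + sfun (i+1) * (γ - l) := by
          rw [s_succ]; simp only [hAdef]; ring
        rw [e1]
        rw [show ∀ z : ℝ, Int.fract z = z - ⌊z⌋ from fun z => rfl,
          show ∀ z : ℝ, Int.fract z = z - ⌊z⌋ from fun z => rfl, hfloor]
        simp only [hAdef]
        ring
    have h1 := main (n+1) le_rfl (l + δ) ⟨by linarith, le_rfl⟩
    have ht1 := iter_mem_Ico (l + δ) β 0 ⟨le_rfl, zero_lt_one⟩ (n+1)
    have ht2 := iter_mem_Ico l β 0 ⟨le_rfl, zero_lt_one⟩ (n+1)
    have h2 : sfun (n+1) * δ < 1 := by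
      have := ht1.2; have := ht2.1
      nlinarith [h1]
    have h3 : (1:ℝ) ≤ sfun (n+1) * δ := by
      have h4 : 1 < β ^ n * δ := by
        rw [div_lt_iff₀ hδ0] at hn; linarith
      have h5 : β ^ n * δ ≤ sfun (n+1) * δ := by
        nlinarith [s_lb n]
      linarith
    linarith
  obtain ⟨γ, hγI, p, hp1, _, hp0⟩ := key
  refine ⟨γ, ⟨le_trans hl.1 hγI.1, lt_of_le_of_lt hγI.2 hw1⟩, ?_, p, hp1, hp0⟩
  rw [abs_sub_lt_iff]
  constructor <;> [linarith [hγI.2]; linarith [hγI.1]]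

/-- **Theorem (denseness).** For every `β > 2` there is a dense set of `α ∈ [0,1)`
such that `𝖣(a)` is bounded (where `a = Ω(0)` and `b` is the lexicographic
supremum of the subshift `Σ` associated to `(α, β)`). -/
theorem dense_bounded_Da (β : ℝ) (hβ : 2 < β) :
    ∀ α ∈ Set.Ico (0 : ℝ) 1, ∀ ε > (0 : ℝ), ∃ α' ∈ Set.Ico (0 : ℝ) 1, |α' - α| < ε ∧
      ∃ b : ℕ → ℕ, b ∈ Sig α' β ∧ (∀ x ∈ Sig α' β, lexLe x b) ∧
        BddAbove (D (Om α' β 0) b) := by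
  classical
  intro α hα ε hε
  have hβ0 : (0:ℝ) < β := by linarith
  obtain ⟨γ, hγ, hclose, p, hp1, hper0⟩ := dense_periodic β hβ α hα ε hε
  refine ⟨γ, hγ, hclose, bmax γ β, bmax_mem γ β hβ0 hγ.2, bmax_max γ β hβ0 hγ.2, ?_⟩
  set a : ℕ → ℕ := Om γ β 0 with hadef
  -- periodicity of a
  have hper : ∀ m, a (m + p) = a m := by
    intro m
    show (⌊β * ((F γ β)^[m + p] 0) + γ⌋).toNat = (⌊β * ((F γ β)^[m] 0) + γ⌋).toNat
    rw [Function.iterate_add_apply, hper0]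
  have hmul : ∀ q m, a (m + p * q) = a m := by
    intro q
    induction q with
    | zero => intro m; simp
    | succ q ih =>
      intro m
      rw [Nat.mul_succ, ← Nat.add_assoc, hper, ih]
  have hmod : ∀ j i, a (j + i) = a (j % p + i) := by
    intro j i
    have e := Nat.mod_add_div j p
    calc a (j + i) = a ((j % p + i) + p * (j / p)) := by
          congr 1; omega
      _ = a (j % p + i) := hmul _ _
  -- b differs from every shifted a
  have hneq : ∀ r : ℕ, ∃ i, bmax γ β i ≠ a (r + i) := by
    intro r
    by_contra hall
    push_neg at hall
    have hy : (F γ β)^[r] (0:ℝ) ∈ Set.Ico (0:ℝ) 1 :=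
      iter_mem_Ico γ β 0 ⟨le_rfl, zero_lt_one⟩ r
    obtain ⟨x, hx, k, hag, hlt⟩ := exists_lex_gt γ β hγ.1 hβ ((F γ β)^[r] 0) hy
    have hbx : lexLe (Om γ β x) (bmax γ β) :=
      bmax_max γ β hβ0 hγ.2 _ (subset_closure ⟨x, hx, rfl⟩)
    have hbeq : ∀ i, bmax γ β i = Om γ β ((F γ β)^[r] 0) i := by
      intro i
      rw [hall i]
      exact om_shift γ β 0 r i
    rcases hbx with h | ⟨k', hag', hlt'⟩
    · have h1 : Om γ β x k = bmax γ β k := by rw [h]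
      rw [hbeq k] at h1
      omega
    · rw [hbeq k'] at hlt'
      rcases lt_trichotomy k' k with h1 | h1 | h1
      · have := hag k' h1
        omega
      · subst h1; omega
      · have h2 := hag' k h1
        rw [hbeq k] at h2
        omega
  choose f hf using hneq
  refine ⟨(Finset.range p).sup f, ?_⟩
  rintro n ⟨j, hj⟩
  by_contra hcon
  push_neg at hcon
  have hr : j % p < p := Nat.mod_lt _ hp1
  have hfr : f (j % p) ≤ (Finset.range p).sup f := Finset.le_sup (Finset.mem_range.2 hr)
  have hi : f (j % p) < n := lt_of_le_of_lt hfr hcon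
  have h1 := hj (f (j % p)) hi
  rw [hmod j (f (j % p))] at h1
  exact hf (j % p) h1

end IntermediateBeta
end
end
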